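/- arXiv:1206.1771 — 5 statements merged into one kernel-verified Lean document; each statement's English description precedes it below -/
import Mathlib

section
/- Let b ∈ C¹(ℝ) be 1-periodic. Then for every ε > 0, every interval [α, β] ⊂ ℝ, and every g ∈ C¹([α,β]), | ∫_α^β |b'(t/ε)| g(t) dt − (∫₀¹ |b'(z)| dz) ∫_α^β g(t) dt | ≤ C ε (max_{[α,β]} |g| + ∫_α^β |g'(t)| dt), where C depends only on b. -/
open MeasureTheory

/-- Averaging lemma for a fast oscillating periodic density `|b'(·/ε)|`: it can be
replaced by its mean at cost `O(ε)`, uniformly over `C¹` test functions `g`. -/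
theorem averaging_oscillating_density (b b' : ℝ → ℝ)
    (hderiv : ∀ t, HasDerivAt b (b' t) t)
    (hcont : Continuous b')
    (hper : Function.Periodic b 1) :
    ∃ C > (0 : ℝ), ∀ ε > (0 : ℝ), ∀ α β : ℝ, α ≤ β → ∀ g g' : ℝ → ℝ,
      (∀ t ∈ Set.Icc α β, HasDerivAt g (g' t) t) →
      ContinuousOn g' (Set.Icc α β) →
      |(∫ t in α..β, |b' (t / ε)| * g t) -
          (∫ z in (0:ℝ)..1, |b' z|) * ∫ t in α..β, g t| ≤
        C * ε * (sSup ((fun t => |g t|) '' Set.Icc α β) + ∫ t in α..β, |g' t|) := by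
  -- b' is periodic
  have hper' : Function.Periodic b' 1 := by
    intro t
    have h1 : HasDerivAt (fun s => b (s + 1)) (b' (t + 1)) t := by
      have := (hderiv (t + 1)).comp t ((hasDerivAt_id t).add_const 1)
      rw [mul_one] at this; exact this
    have h2 : (fun s => b (s + 1)) = b := funext fun s => hper s
    rw [h2] at h1
    exact h1.unique (hderiv t)
  set M : ℝ := ∫ z in (0:ℝ)..1, |b' z| with hM
  set h : ℝ → ℝ := fun z => |b' z| - M with hh
  have hconth : Continuous h := (hcont.abs).sub continuous_const
  have hperh : Function.Periodic h 1 := fun t => by simp [hh, hper' t]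
  set H : ℝ → ℝ := fun t => ∫ z in (0:ℝ)..t, h z with hH
  have hHderiv : ∀ t, HasDerivAt H (h t) t := fun t =>
    intervalIntegral.integral_hasDerivAt_right (hconth.intervalIntegrable 0 t)
      (hconth.stronglyMeasurableAtFilter _ _) hconth.continuousAt
  have hHcont : Continuous H := by
    apply continuous_iff_continuousAt.2
    exact fun t => (hHderiv t).continuousAt
  -- integral of h over a period is 0
  have hint01 : (∫ z in (0:ℝ)..1, h z) = 0 := by
    simp only [hh]
    rw [intervalIntegral.integral_sub (hcont.abs.intervalIntegrable 0 1)
      (intervalIntegrable_const)]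
    simp [hM]
  have hHper : Function.Periodic H 1 := by
    intro t
    have : (∫ z in (0:ℝ)..(t+1), h z) = (∫ z in (0:ℝ)..t, h z) + ∫ z in t..(t+1), h z := by
      rw [intervalIntegral.integral_add_adjacent_intervals (hconth.intervalIntegrable 0 t)
        (hconth.intervalIntegrable t (t+1))]
    have h2 : (∫ z in t..(t+1), h z) = ∫ z in (0:ℝ)..(0+1), h z :=
      hperh.intervalIntegral_add_eq t 0
    simp only [hH]
    rw [this, h2]
    simp [hint01]
  -- bound on H
  obtain ⟨x0, hx0, hx0max⟩ := isCompact_Icc.exists_isMaxOn (Set.nonempty_Icc.2 zero_le_one)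
    (hHcont.abs.continuousOn : ContinuousOn (fun t => |H t|) (Set.Icc 0 1))
  set K : ℝ := |H x0| with hK
  have hKnonneg : 0 ≤ K := abs_nonneg _
  have hHbound : ∀ t : ℝ, |H t| ≤ K := by
    intro t
    have hfr : Int.fract t ∈ Set.Icc (0:ℝ) 1 :=
      ⟨Int.fract_nonneg t, (Int.fract_lt_one t).le⟩
    have : H t = H (Int.fract t) := by
      have h5 := hHper.sub_int_mul_eq (x := t) ⌊t⌋
      rw [Int.fract]
      simpa using h5.symm
    rw [this]
    exact hx0max hfr
  refine ⟨2 * K + 2, by positivity, ?_⟩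
  intro ε hε α β hab g g' hg hg'
  -- continuity of g on Icc
  have hgcont : ContinuousOn g (Set.Icc α β) := fun t ht =>
    (hg t ht).continuousAt.continuousWithinAt
  have huIcc : Set.uIcc α β = Set.Icc α β := Set.uIcc_of_le hab
  -- the antiderivative u
  set u : ℝ → ℝ := fun t => ε * H (t / ε) with hu
  have huderiv : ∀ t : ℝ, HasDerivAt u (h (t / ε)) t := by
    intro t
    have h1 : HasDerivAt (fun s : ℝ => s / ε) (1 / ε) t := by
      simpa using (hasDerivAt_id t).div_const ε
    have h2 : HasDerivAt (fun s : ℝ => H (s / ε)) (h (t / ε) * (1 / ε)) t :=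
      by have h4 := (hHderiv (t / ε)).comp t h1; exact h4
    have h3 := h2.const_mul ε
    have : ε * (h (t / ε) * (1 / ε)) = h (t / ε) := by
      field_simp
    rw [this] at h3
    exact h3
  have hubound : ∀ t : ℝ, |u t| ≤ ε * K := by
    intro t
    simp only [hu, abs_mul, abs_of_pos hε]
    exact mul_le_mul_of_nonneg_left (hHbound _) hε.le
  -- integrability facts
  have hcont_hε : Continuous fun t : ℝ => h (t / ε) :=
    hconth.comp (continuous_id.div_const ε)
  have hint_hε : IntervalIntegrable (fun t => h (t / ε)) volume α β :=
    hcont_hε.intervalIntegrable α β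
  have hint_g' : IntervalIntegrable g' volume α β :=
    (huIcc ▸ hg' : ContinuousOn g' (Set.uIcc α β)).intervalIntegrable
  -- integration by parts
  have hibp := intervalIntegral.integral_mul_deriv_eq_deriv_mul
    (u := u) (v := g) (u' := fun t => h (t / ε)) (v' := g')
    (fun t ht => huderiv t) (fun t ht => hg t (huIcc ▸ ht)) hint_hε hint_g'
  -- ∫ u' * g = u β g β - u α g α - ∫ u g'
  have key : (∫ t in α..β, h (t / ε) * g t)
      = u β * g β - u α * g α - ∫ t in α..β, u t * g' t := by
    have h2 : (∫ t in α..β, h (t / ε) * g t)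
        = u β * g β - u α * g α - ∫ t in α..β, u t * g' t := by
      have := intervalIntegral.integral_mul_deriv_eq_deriv_mul
        (u := g) (v := u) (u' := g') (v' := fun t => h (t / ε))
        (fun t ht => hg t (huIcc ▸ ht)) (fun t ht => huderiv t) hint_g' hint_hε
      -- this : ∫ g * h(t/ε) = g β * u β - g α * u α - ∫ g' * u
      calc (∫ t in α..β, h (t / ε) * g t) = ∫ t in α..β, g t * h (t / ε) := by
            simp_rw [mul_comm]
        _ = g β * u β - g α * u α - ∫ t in α..β, g' t * u t := this
        _ = u β * g β - u α * g α - ∫ t in α..β, u t * g' t := by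
            rw [mul_comm (g β), mul_comm (g α)]
            congr 1
            simp_rw [mul_comm]
    exact h2
  -- rewrite LHS
  have hgint : IntervalIntegrable g volume α β :=
    (huIcc ▸ hgcont : ContinuousOn g (Set.uIcc α β)).intervalIntegrable
  have hbg_int : IntervalIntegrable (fun t => |b' (t / ε)| * g t) volume α β := by
    apply ContinuousOn.intervalIntegrable
    rw [huIcc]
    exact ((hcont.comp (continuous_id.div_const ε)).abs.continuousOn).mul hgcont
  have hLHS : (∫ t in α..β, |b' (t / ε)| * g t) - M * ∫ t in α..β, g t
      = ∫ t in α..β, h (t / ε) * g t := by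
    simp only [hh]
    rw [← intervalIntegral.integral_const_mul]
    rw [← intervalIntegral.integral_sub hbg_int (hgint.const_mul M)]
    congr 1
    funext t
    ring
  -- sup bound
  set S : ℝ := sSup ((fun t => |g t|) '' Set.Icc α β) with hS
  have hcompact : IsCompact ((fun t => |g t|) '' Set.Icc α β) :=
    isCompact_Icc.image_of_continuousOn (hgcont.abs)
  have hbdd : BddAbove ((fun t => |g t|) '' Set.Icc α β) := hcompact.bddAbove
  have hga : |g α| ≤ S := le_csSup hbdd ⟨α, Set.left_mem_Icc.2 hab, rfl⟩
  have hgb : |g β| ≤ S := le_csSup hbdd ⟨β, Set.right_mem_Icc.2 hab, rfl⟩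
  have hSnonneg : 0 ≤ S := le_trans (abs_nonneg _) hga
  -- integral of |g'|
  set I : ℝ := ∫ t in α..β, |g' t| with hI
  have hInonneg : 0 ≤ I :=
    intervalIntegral.integral_nonneg hab (fun t ht => abs_nonneg _)
  -- bound the remainder integral
  have hint_ug' : IntervalIntegrable (fun t => u t * g' t) volume α β := by
    apply ContinuousOn.intervalIntegrable
    rw [huIcc]
    exact ((continuous_const.mul (hHcont.comp (continuous_id.div_const ε))).continuousOn).mul hg'
  have hrem : |∫ t in α..β, u t * g' t| ≤ ε * K * I := by
    calc |∫ t in α..β, u t * g' t| ≤ ∫ t in α..β, |u t * g' t| :=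
          intervalIntegral.abs_integral_le_integral_abs hab
      _ ≤ ∫ t in α..β, ε * K * |g' t| := by
          apply intervalIntegral.integral_mono_on hab hint_ug'.abs
            ((hint_g'.abs).const_mul (ε * K))
          intro t ht
          rw [abs_mul]
          exact mul_le_mul_of_nonneg_right (hubound t) (abs_nonneg _)
      _ = ε * K * I := by rw [intervalIntegral.integral_const_mul]
  -- final estimate
  rw [hLHS, key]
  have h1 : |u β * g β - u α * g α - ∫ t in α..β, u t * g' t|
      ≤ |u β| * |g β| + |u α| * |g α| + |∫ t in α..β, u t * g' t| := by
    calc |u β * g β - u α * g α - ∫ t in α..β, u t * g' t|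
        ≤ |u β * g β - u α * g α| + |∫ t in α..β, u t * g' t| := abs_sub _ _
      _ ≤ |u β * g β| + |u α * g α| + |∫ t in α..β, u t * g' t| := by
          gcongr; exact abs_sub _ _
      _ = |u β| * |g β| + |u α| * |g α| + |∫ t in α..β, u t * g' t| := by
          rw [abs_mul (u β), abs_mul (u α)]
  have h2 : |u β| * |g β| ≤ ε * K * S :=
    mul_le_mul (hubound β) hgb (abs_nonneg _) (by positivity)
  have h3 : |u α| * |g α| ≤ ε * K * S :=
    mul_le_mul (hubound α) hga (abs_nonneg _) (by positivity)
  have := h1.trans (by linarith : |u β| * |g β| + |u α| * |g α| + |∫ t in α..β, u t * g' t|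
      ≤ ε * K * S + ε * K * S + ε * K * I)
  refine this.trans ?_
  nlinarith [mul_nonneg hε.le hSnonneg, mul_nonneg hε.le hInonneg,
    mul_nonneg (mul_nonneg hε.le hKnonneg) hSnonneg,
    mul_nonneg (mul_nonneg hε.le hKnonneg) hInonneg]
end

section
/- For μ ∈ (0, 1/8), the function v on the square □ = (0,1) × (0,1) defined by v(x) = 1 if |x − p| < 3μ and v(x) = ln|x − p| / ln(3μ) if |x − p| ≥ 3μ, where p = (1/2, 0), satisfies ‖v‖²_{L²(Ξ_μ)} ≥ C μ |ln μ| ‖v‖²_{H¹(□)} for some constant C > 0 independent of μ, where Ξ_μ := {(x₁, 0) : |x₁ − 1/2| < μ}. -/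
open MeasureTheory

/-- The distance to the point `p = (1/2, 0)` in the Euclidean metric of `ℝ²`. -/
noncomputable def distToP (x : ℝ × ℝ) : ℝ :=
  Real.sqrt ((x.1 - 1 / 2) ^ 2 + x.2 ^ 2)

/-- The logarithmic capacity potential of the disc of radius `3μ` centered at `(1/2,0)`. -/
noncomputable def logPotential (μ : ℝ) (x : ℝ × ℝ) : ℝ :=
  if distToP x < 3 * μ then 1 else Real.log (distToP x) / Real.log (3 * μ)

section Aux

open Set intervalIntegral

lemma distToP_cont : Continuous distToP := by
  unfold distToP
  fun_prop

lemma abs_fst_le (x : ℝ × ℝ) : |x.1 - 1/2| ≤ distToP x := by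
  rw [← Real.sqrt_sq_eq_abs]
  exact Real.sqrt_le_sqrt (by nlinarith [sq_nonneg x.2])

lemma abs_snd_le (x : ℝ × ℝ) : |x.2| ≤ distToP x := by
  rw [← Real.sqrt_sq_eq_abs]
  exact Real.sqrt_le_sqrt (by nlinarith [sq_nonneg (x.1 - 1/2)])

lemma inside_eq {μ : ℝ} {x : ℝ × ℝ} (h : distToP x < 3*μ) : logPotential μ x = 1 :=
  if_pos h

lemma outside_eq {μ : ℝ} {x : ℝ × ℝ} (h : ¬ distToP x < 3*μ) :
    logPotential μ x = Real.log (distToP x) / Real.log (3*μ) := if_neg h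

lemma fderiv_inside {μ : ℝ} {x : ℝ × ℝ} (h : distToP x < 3*μ) :
    fderiv ℝ (logPotential μ) x = 0 := by
  have hmem : {y : ℝ × ℝ | distToP y < 3*μ} ∈ nhds x :=
    (isOpen_lt distToP_cont continuous_const).mem_nhds h
  have heq : logPotential μ =ᶠ[nhds x] fun _ => (1:ℝ) :=
    Filter.eventually_of_mem hmem fun y hy => if_pos hy
  rw [heq.fderiv_eq, fderiv_fun_const]
  rfl

lemma hasfd {x : ℝ × ℝ} (hr : 0 < distToP x) (L : ℝ) :
    HasFDerivAt (fun y => L⁻¹ * Real.log (distToP y))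
      ((L⁻¹ * ((distToP x)⁻¹ * (1 / (2 * distToP x)))) •
        ((2*(x.1 - 1/2)) • ContinuousLinearMap.fst ℝ ℝ ℝ
          + (2*x.2) • ContinuousLinearMap.snd ℝ ℝ ℝ)) x := by
  have h1 : HasFDerivAt (fun y : ℝ × ℝ => y.1 - 1/2) (ContinuousLinearMap.fst ℝ ℝ ℝ) x :=
    (hasFDerivAt_fst).sub_const _
  have h2 : HasFDerivAt (fun y : ℝ × ℝ => y.2) (ContinuousLinearMap.snd ℝ ℝ ℝ) x :=
    hasFDerivAt_snd
  have hq : HasFDerivAt (fun y : ℝ × ℝ => (y.1 - 1/2)^2 + y.2^2)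
      ((2*(x.1 - 1/2)) • ContinuousLinearMap.fst ℝ ℝ ℝ
        + (2*x.2) • ContinuousLinearMap.snd ℝ ℝ ℝ) x := by
    have h := (h1.mul h1).add (h2.mul h2)
    refine (h.congr_fderiv ?_).congr_of_eventuallyEq (Filter.Eventually.of_forall fun y => ?_)
    · module
    · simp only [Pi.add_apply, Pi.mul_apply]; ring
  have hq0 : (x.1 - 1/2)^2 + x.2^2 ≠ 0 := (Real.sqrt_pos.mp hr).ne'
  have hsq : HasFDerivAt distToP
      ((1 / (2 * distToP x)) • ((2*(x.1 - 1/2)) • ContinuousLinearMap.fst ℝ ℝ ℝ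
        + (2*x.2) • ContinuousLinearMap.snd ℝ ℝ ℝ)) x :=
    (Real.hasDerivAt_sqrt hq0).comp_hasFDerivAt x hq
  have hlog : HasFDerivAt (fun y => Real.log (distToP y))
      ((distToP x)⁻¹ • ((1 / (2 * distToP x)) • ((2*(x.1 - 1/2)) • ContinuousLinearMap.fst ℝ ℝ ℝ
        + (2*x.2) • ContinuousLinearMap.snd ℝ ℝ ℝ))) x :=
    (Real.hasDerivAt_log hr.ne').comp_hasFDerivAt x hsq
  have h := hlog.const_mul L⁻¹
  refine h.congr_fderiv ?_
  rw [smul_smul, smul_smul]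
  ring_nf

lemma norm_bound {x : ℝ × ℝ} (hr : 0 < distToP x) {L : ℝ} (hL : L ≠ 0) :
    ‖(L⁻¹ * ((distToP x)⁻¹ * (1 / (2 * distToP x)))) •
        ((2*(x.1 - 1/2)) • ContinuousLinearMap.fst ℝ ℝ ℝ
          + (2*x.2) • ContinuousLinearMap.snd ℝ ℝ ℝ)‖ ≤ 2 / (distToP x * |L|) := by
  set r := distToP x with hrdef
  set D := ((2*(x.1 - 1/2)) • ContinuousLinearMap.fst ℝ ℝ ℝ
          + (2*x.2) • ContinuousLinearMap.snd ℝ ℝ ℝ) with hD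
  have hDle : ‖D‖ ≤ 4 * r := by
    apply ContinuousLinearMap.opNorm_le_bound _ (by positivity)
    intro h
    have hh : D h = 2*(x.1 - 1/2) * h.1 + 2*x.2 * h.2 := by
      simp [hD, smul_eq_mul]
    rw [hh]
    have h1 : |h.1| ≤ ‖h‖ := by
      simpa [Real.norm_eq_abs] using norm_fst_le h
    have h2 : |h.2| ≤ ‖h‖ := by
      simpa [Real.norm_eq_abs] using norm_snd_le h
    have e1 := abs_fst_le x
    have e2 := abs_snd_le x
    have hstep : |2*(x.1 - 1/2) * h.1 + 2*x.2 * h.2| ≤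
        2 * |x.1 - 1/2| * |h.1| + 2 * |x.2| * |h.2| := by
      calc |2*(x.1 - 1/2) * h.1 + 2*x.2 * h.2|
          ≤ |2*(x.1 - 1/2) * h.1| + |2*x.2 * h.2| := abs_add_le _ _
        _ = 2 * |x.1 - 1/2| * |h.1| + 2 * |x.2| * |h.2| := by
            rw [abs_mul, abs_mul, abs_mul, abs_mul]; simp [abs_of_nonneg]
    calc ‖2*(x.1 - 1/2) * h.1 + 2*x.2 * h.2‖
        = |2*(x.1 - 1/2) * h.1 + 2*x.2 * h.2| := rfl
      _ ≤ 2 * |x.1 - 1/2| * |h.1| + 2 * |x.2| * |h.2| := hstep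
      _ ≤ 4 * r * ‖h‖ := by
          have m1 := mul_le_mul e1 h1 (abs_nonneg _) ((abs_nonneg _).trans e1)
          have m2 := mul_le_mul e2 h2 (abs_nonneg _) ((abs_nonneg _).trans e2)
          nlinarith [m1, m2]
  rw [norm_smul (L⁻¹ * (r⁻¹ * (1 / (2 * r)))) D]
  have habs : ‖L⁻¹ * (r⁻¹ * (1 / (2 * r)))‖ = |L|⁻¹ * (r⁻¹ * (1 / (2*r))) := by
    rw [Real.norm_eq_abs, abs_mul, abs_inv, abs_mul, abs_inv,
      abs_of_pos hr, abs_of_pos (by positivity : (0:ℝ) < 1/(2*r))]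
  rw [habs]
  have hLpos : 0 < |L| := abs_pos.mpr hL
  calc |L|⁻¹ * (r⁻¹ * (1 / (2*r))) * ‖D‖ ≤ |L|⁻¹ * (r⁻¹ * (1 / (2*r))) * (4*r) := by
        gcongr
    _ = 2 / (r * |L|) := by field_simp; ring

lemma fderiv_outside {μ : ℝ} {x : ℝ × ℝ} (hμ : 0 < μ) (h : 3*μ < distToP x)
    (hL : Real.log (3*μ) ≠ 0) :
    ‖fderiv ℝ (logPotential μ) x‖ ≤ 2 / (distToP x * |Real.log (3*μ)|) := by
  have hr : 0 < distToP x := lt_trans (by linarith) h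
  have hmem : {y : ℝ × ℝ | 3*μ < distToP y} ∈ nhds x :=
    (isOpen_lt continuous_const distToP_cont).mem_nhds h
  have heq : logPotential μ =ᶠ[nhds x]
      fun y => (Real.log (3*μ))⁻¹ * Real.log (distToP y) :=
    Filter.eventually_of_mem hmem fun y hy => by
      have hy' : 3*μ < distToP y := hy
      simp only [logPotential, if_neg (not_lt.mpr (le_of_lt hy'))]
      rw [div_eq_inv_mul]
  rw [heq.fderiv_eq, (hasfd hr (Real.log (3*μ))).fderiv]
  exact norm_bound hr hL

lemma circle_null (c : ℝ) : volume {x : ℝ × ℝ | distToP x = c} = 0 := by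
  have hsub : {x : ℝ × ℝ | distToP x = c} ⊆
      {x : ℝ × ℝ | (x.1 - 1/2)^2 + x.2^2 = c^2} := by
    intro x hx
    simp only [mem_setOf_eq] at hx ⊢
    rw [← hx]
    exact (Real.sq_sqrt (by positivity)).symm
  refine measure_mono_null hsub ?_
  have hmeas : MeasurableSet {x : ℝ × ℝ | (x.1 - 1/2)^2 + x.2^2 = c^2} := by
    apply measurableSet_eq_fun <;> fun_prop
  rw [Measure.volume_eq_prod, Measure.prod_apply hmeas]
  have hz : ∀ a : ℝ, (volume (Prod.mk a ⁻¹' {x : ℝ × ℝ | (x.1 - 1/2)^2 + x.2^2 = c^2})) = 0 := by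
    intro a
    have hsub2 : (Prod.mk a ⁻¹' {x : ℝ × ℝ | (x.1 - 1/2)^2 + x.2^2 = c^2}) ⊆
        {Real.sqrt (c^2 - (a - 1/2)^2), -Real.sqrt (c^2 - (a - 1/2)^2)} := by
      intro y hy
      simp only [mem_preimage, mem_setOf_eq] at hy
      have hy2 : y^2 = c^2 - (a - 1/2)^2 := by linarith
      have halt : y = Real.sqrt (c^2 - (a-1/2)^2) ∨ y = -Real.sqrt (c^2 - (a-1/2)^2) := by
        have hs : Real.sqrt (c^2 - (a-1/2)^2) = |y| := by
          rw [← hy2, Real.sqrt_sq_eq_abs]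
        rcases abs_cases y with ⟨h1, _⟩ | ⟨h1, _⟩
        · left; rw [hs, h1]
        · right; rw [hs, h1]; ring
      simpa using halt
    refine measure_mono_null hsub2 ?_
    exact Set.Countable.measure_zero ((countable_singleton _).insert _) _
  simp only [hz]
  simp

lemma pointwise_bound {μ : ℝ} (hμ0 : 0 < μ) (hμ : μ < 1/8) {x : ℝ × ℝ}
    (hx : x ∈ Ioo (0:ℝ) 1 ×ˢ Ioo (0:ℝ) 1) (hne : distToP x ≠ 3*μ) :
    (logPotential μ x)^2 + ‖fderiv ℝ (logPotential μ) x‖^2 ≤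
      ((Real.log x.2)^2 + 1)/(Real.log (3*μ))^2
        + 8/(((x.1-1/2)^2 + (max x.2 (3*μ))^2) * (Real.log (3*μ))^2) := by
  obtain ⟨⟨hx1a, hx1b⟩, hx2a, hx2b⟩ := hx
  set L := Real.log (3*μ) with hLdef
  have hL : L < 0 := Real.log_neg (by linarith) (by linarith)
  have hLsq : 0 < L^2 := by nlinarith [hL]
  set r := distToP x with hrdef
  have hx2r : x.2 ≤ r := le_trans (le_abs_self _) (abs_snd_le x)
  have hrpos : 0 < r := lt_of_lt_of_le hx2a hx2r
  have hbpos : 0 < max x.2 (3*μ) := lt_max_of_lt_right (by linarith)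
  have hdenpos : 0 < (x.1-1/2)^2 + (max x.2 (3*μ))^2 := by positivity
  rcases lt_or_gt_of_ne hne with h | h
  · rw [inside_eq h, fderiv_inside h]
    have hlx2 : Real.log x.2 ≤ L := Real.log_le_log hx2a (le_trans hx2r h.le)
    have hsq : L^2 ≤ (Real.log x.2)^2 := by
      have habs := abs_le_abs_of_nonpos hL.le hlx2
      calc L^2 = |L|^2 := (sq_abs L).symm
        _ ≤ |Real.log x.2|^2 := by gcongr
        _ = (Real.log x.2)^2 := sq_abs _
    have h1 : (1:ℝ)^2 + ‖(0 : (ℝ×ℝ) →L[ℝ] ℝ)‖^2 = 1 := by simp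
    rw [h1]
    have h2 : (1:ℝ) ≤ ((Real.log x.2)^2 + 1)/L^2 := by
      rw [le_div_iff₀ hLsq]
      linarith
    have h3 : (0:ℝ) ≤ 8/(((x.1-1/2)^2 + (max x.2 (3*μ))^2) * L^2) := by positivity
    linarith
  · have hLne : L ≠ 0 := hL.ne
    rw [outside_eq (not_lt.mpr h.le)]
    have hv : (Real.log r / L)^2 ≤ ((Real.log x.2)^2 + 1)/L^2 := by
      rw [div_pow, div_le_div_iff₀ hLsq hLsq]
      have hbound : (Real.log r)^2 ≤ (Real.log x.2)^2 + 1 := by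
        rcases le_or_gt r 1 with hr1 | hr1
        · have hlr : Real.log r ≤ 0 := Real.log_nonpos hrpos.le hr1
          have hlx2 : Real.log x.2 ≤ Real.log r := Real.log_le_log hx2a hx2r
          have habs := abs_le_abs_of_nonpos hlr hlx2
          have hsq2 : (Real.log r)^2 ≤ (Real.log x.2)^2 := by
            calc (Real.log r)^2 = |Real.log r|^2 := (sq_abs _).symm
              _ ≤ |Real.log x.2|^2 := by gcongr
              _ = (Real.log x.2)^2 := sq_abs _
          nlinarith [sq_nonneg (Real.log x.2)]
        · have hr2 : r ≤ 2 := by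
            rw [hrdef]
            unfold distToP
            calc Real.sqrt ((x.1 - 1/2)^2 + x.2^2) ≤ Real.sqrt 4 := by
                  apply Real.sqrt_le_sqrt; nlinarith
              _ = 2 := by
                  rw [show (4:ℝ) = 2^2 by norm_num, Real.sqrt_sq (by norm_num)]
          have h0 : 0 ≤ Real.log r := Real.log_nonneg hr1.le
          have h1 : Real.log r ≤ 1 := by
            calc Real.log r ≤ Real.log 2 := Real.log_le_log hrpos hr2
              _ ≤ 2 - 1 := Real.log_le_sub_one_of_pos (by norm_num)
              _ = 1 := by norm_num
          nlinarith [sq_nonneg (Real.log x.2)]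
      nlinarith [sq_nonneg L]
    have hg : ‖fderiv ℝ (logPotential μ) x‖^2 ≤
        8/(((x.1-1/2)^2 + (max x.2 (3*μ))^2) * L^2) := by
      have hb := fderiv_outside hμ0 h hLne
      have habs : 0 < |L| := abs_pos.mpr hLne
      have h2 : ‖fderiv ℝ (logPotential μ) x‖^2 ≤ (2/(r * |L|))^2 := by
        have := pow_le_pow_left₀ (norm_nonneg _) hb 2
        simpa using this
      refine le_trans h2 ?_
      rw [div_pow, div_le_div_iff₀ (by positivity) (by positivity)]
      have hs2 : (x.1-1/2)^2 ≤ r^2 := by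
        calc (x.1-1/2)^2 = |x.1-1/2|^2 := (sq_abs _).symm
          _ ≤ r^2 := by gcongr; exact abs_fst_le x
      have hb2 : (max x.2 (3*μ))^2 ≤ r^2 := by
        have hmr : max x.2 (3*μ) ≤ r := max_le hx2r h.le
        gcongr
      have hLabs : |L|^2 = L^2 := sq_abs L
      calc 2^2 * (((x.1-1/2)^2 + (max x.2 (3*μ))^2) * L^2)
          ≤ 4 * ((r^2 + r^2) * L^2) := by
            rw [show (2:ℝ)^2 = 4 by norm_num]
            gcongr
        _ = 8 * ((r*|L|)^2) := by rw [← hLabs]; ring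
    exact add_le_add hv hg

lemma log_sq_le {y : ℝ} (hy : 0 < y) (hy1 : y < 1) :
    (Real.log y)^2 ≤ 16 * y ^ (-(1/2) : ℝ) := by
  have h1 : Real.log y⁻¹ ≤ (y⁻¹) ^ ((1/4):ℝ) / (1/4) :=
    Real.log_le_rpow_div (by positivity) (by norm_num)
  rw [Real.log_inv] at h1
  have h2 : (y⁻¹) ^ ((1/4):ℝ) = y ^ (-(1/4) : ℝ) := by
    rw [Real.inv_rpow hy.le, ← Real.rpow_neg hy.le]
  rw [h2] at h1
  have h3 : -Real.log y ≤ 4 * y ^ (-(1/4):ℝ) := by linarith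
  have h4 : 0 ≤ -Real.log y := by
    have := Real.log_nonpos hy.le hy1.le
    linarith
  have h5 : (Real.log y)^2 = (-Real.log y)^2 := by ring
  rw [h5]
  calc (-Real.log y)^2 ≤ (4 * y ^ (-(1/4):ℝ))^2 := by
        apply pow_le_pow_left₀ h4 h3
    _ = 16 * (y ^ (-(1/4):ℝ))^2 := by ring
    _ = 16 * y ^ (-(1/2):ℝ) := by
        rw [← Real.rpow_natCast (y ^ (-(1/4):ℝ)) 2, ← Real.rpow_mul hy.le]
        norm_num

lemma phi_integrableOn : IntegrableOn (fun y : ℝ => 16 * y ^ (-(1/2):ℝ) + 1) (Ioo (0:ℝ) 1) := by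
  have h := intervalIntegral.intervalIntegrable_rpow' (a := (0:ℝ)) (b := 1)
    (r := -(1/2)) (by norm_num)
  have h2 : IntegrableOn (fun y : ℝ => y ^ (-(1/2):ℝ)) (Ioo (0:ℝ) 1) := by
    rw [intervalIntegrable_iff_integrableOn_Ioc_of_le zero_le_one] at h
    exact h.mono_set Ioo_subset_Ioc_self
  exact (h2.const_mul 16).add (integrableOn_const measure_Ioo_lt_top.ne)

lemma psi_integrableOn : IntegrableOn (fun y : ℝ => (Real.log y)^2 + 1) (Ioo (0:ℝ) 1) := by
  apply Integrable.mono' phi_integrableOn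
  · exact ((Real.measurable_log.pow_const 2).add_const 1).aestronglyMeasurable
  · filter_upwards [ae_restrict_mem measurableSet_Ioo] with y hy
    have := log_sq_le hy.1 hy.2
    rw [Real.norm_eq_abs, abs_of_nonneg (by positivity)]
    linarith

lemma psi_integral_le : ∫ y in Ioo (0:ℝ) 1, ((Real.log y)^2 + 1) ≤ 33 := by
  have hmono : ∫ y in Ioo (0:ℝ) 1, ((Real.log y)^2 + 1) ≤
      ∫ y in Ioo (0:ℝ) 1, (16 * y ^ (-(1/2):ℝ) + 1) := by
    apply setIntegral_mono_on psi_integrableOn phi_integrableOn measurableSet_Ioo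
    intro y hy
    have := log_sq_le hy.1 hy.2
    linarith
  refine le_trans hmono ?_
  rw [← integral_Ioc_eq_integral_Ioo,
    ← intervalIntegral.integral_of_le zero_le_one]
  have hi1 : IntervalIntegrable (fun y : ℝ => 16 * y ^ (-(1/2):ℝ)) volume 0 1 :=
    (intervalIntegral.intervalIntegrable_rpow' (by norm_num)).const_mul 16
  have hi2 : IntervalIntegrable (fun _ : ℝ => (1:ℝ)) volume 0 1 :=
    intervalIntegrable_const
  rw [intervalIntegral.integral_add hi1 hi2, intervalIntegral.integral_const_mul,
    integral_rpow (Or.inl (by norm_num))]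
  simp only [intervalIntegral.integral_const, smul_eq_mul]
  rw [Real.zero_rpow (by norm_num), Real.one_rpow]
  norm_num

lemma inner_bound {b : ℝ} (hb : 0 < b) :
    ∫ x in Ioo (0:ℝ) 1, 1/((x - 1/2)^2 + b^2) ≤ Real.pi / b := by
  have hcont : Continuous (fun x : ℝ => 1/((x - 1/2)^2 + b^2)) := by
    apply Continuous.div continuous_const (by continuity)
    intro x; positivity
  have hderiv : ∀ x : ℝ, HasDerivAt (fun x => b⁻¹ * Real.arctan ((x - 1/2)/b))
      (1/((x - 1/2)^2 + b^2)) x := by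
    intro x
    have h1 : HasDerivAt (fun x : ℝ => (x - 1/2)/b) (1/b) x := by
      exact ((hasDerivAt_id x).sub_const (1/2)).div_const b
    have h2 := (Real.hasDerivAt_arctan ((x - 1/2)/b)).comp x h1
    have h3 := h2.const_mul b⁻¹
    refine h3.congr_deriv ?_
    field_simp
    ring
  rw [← integral_Ioc_eq_integral_Ioo, ← intervalIntegral.integral_of_le zero_le_one]
  rw [intervalIntegral.integral_eq_sub_of_hasDerivAt (fun x _ => hderiv x)
    (hcont.intervalIntegrable 0 1)]
  have ha1 : Real.arctan ((1 - 1/2)/b) < Real.pi/2 := Real.arctan_lt_pi_div_two _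
  have ha2 : -(Real.pi/2) < Real.arctan ((0 - 1/2)/b) := Real.neg_pi_div_two_lt_arctan _
  have hstep : b⁻¹ * Real.arctan ((1 - 1/2)/b) - b⁻¹ * Real.arctan ((0 - 1/2)/b)
      = b⁻¹ * (Real.arctan ((1 - 1/2)/b) - Real.arctan ((0 - 1/2)/b)) := by ring
  rw [hstep]
  have hd : Real.arctan ((1 - 1/2)/b) - Real.arctan ((0 - 1/2)/b) ≤ Real.pi := by linarith
  calc b⁻¹ * (Real.arctan ((1 - 1/2)/b) - Real.arctan ((0 - 1/2)/b))
      ≤ b⁻¹ * Real.pi := by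
        apply mul_le_mul_of_nonneg_left hd (by positivity)
    _ = Real.pi / b := by rw [div_eq_inv_mul]

lemma outer_integral {μ : ℝ} (hμ0 : 0 < μ) (hμ : μ < 1/8) :
    ∫ y in Ioo (0:ℝ) 1, Real.pi / max y (3*μ) ≤ Real.pi * (1 - Real.log (3*μ)) := by
  have h3μ : 0 < 3*μ := by linarith
  have h3μ1 : 3*μ ≤ 1 := by linarith
  have hcont : Continuous (fun y : ℝ => Real.pi / max y (3*μ)) := by
    apply Continuous.div continuous_const (continuous_id.max continuous_const)
    intro y
    exact (lt_max_of_lt_right h3μ).ne'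
  rw [← integral_Ioc_eq_integral_Ioo, ← intervalIntegral.integral_of_le zero_le_one]
  have hsplit : ∫ y in (0:ℝ)..1, Real.pi / max y (3*μ)
      = (∫ y in (0:ℝ)..(3*μ), Real.pi / max y (3*μ))
        + ∫ y in (3*μ)..1, Real.pi / max y (3*μ) := by
    rw [intervalIntegral.integral_add_adjacent_intervals
      (hcont.intervalIntegrable _ _) (hcont.intervalIntegrable _ _)]
  rw [hsplit]
  have h1 : (∫ y in (0:ℝ)..(3*μ), Real.pi / max y (3*μ)) = Real.pi := by
    have heq : ∫ y in (0:ℝ)..(3*μ), Real.pi / max y (3*μ)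
        = ∫ _ in (0:ℝ)..(3*μ), Real.pi / (3*μ) := by
      apply intervalIntegral.integral_congr
      intro y hy
      rw [uIcc_of_le h3μ.le] at hy
      simp only []
      rw [max_eq_right hy.2]
    rw [heq, intervalIntegral.integral_const, smul_eq_mul]
    field_simp
    ring
  have h2 : (∫ y in (3*μ)..1, Real.pi / max y (3*μ)) ≤ Real.pi * (- Real.log (3*μ)) := by
    have heq : ∫ y in (3*μ)..1, Real.pi / max y (3*μ)
        = ∫ y in (3*μ)..1, Real.pi * (1/y) := by
      apply intervalIntegral.integral_congr
      intro y hy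
      rw [uIcc_of_le h3μ1] at hy
      simp only []
      rw [max_eq_left hy.1]
      field_simp
    rw [heq, intervalIntegral.integral_const_mul, integral_one_div]
    · rw [one_div, Real.log_inv]
    · rw [uIcc_of_le h3μ1]
      intro hmem
      exact absurd hmem.1 (by linarith)
  linarith

lemma f_integrableOn {μ : ℝ} (hμ0 : 0 < μ) :
    IntegrableOn (fun x : ℝ × ℝ => 1/((x.1 - 1/2)^2 + (max x.2 (3*μ))^2))
      (Ioo (0:ℝ) 1 ×ˢ Ioo (0:ℝ) 1) := by
  have hcont : Continuous (fun x : ℝ × ℝ => 1/((x.1 - 1/2)^2 + (max x.2 (3*μ))^2)) := by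
    apply Continuous.div continuous_const
    · apply Continuous.add
      · exact (continuous_fst.sub continuous_const).pow 2
      · exact (continuous_snd.max continuous_const).pow 2
    · intro x
      have h1 : 0 < max x.2 (3*μ) := lt_max_of_lt_right (by linarith)
      positivity
  have hsub : Ioo (0:ℝ) 1 ×ˢ Ioo (0:ℝ) 1 ⊆ Icc (0:ℝ) 1 ×ˢ Icc (0:ℝ) 1 :=
    prod_mono Ioo_subset_Icc_self Ioo_subset_Icc_self
  exact (hcont.continuousOn.integrableOn_compact
    (isCompact_Icc.prod isCompact_Icc)).mono_set hsub

lemma sq_meas : MeasurableSet (Ioo (0:ℝ) 1 ×ˢ Ioo (0:ℝ) 1) :=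
  measurableSet_Ioo.prod measurableSet_Ioo

lemma f_square_integral_le {μ : ℝ} (hμ0 : 0 < μ) (hμ : μ < 1/8) :
    ∫ x in Ioo (0:ℝ) 1 ×ˢ Ioo (0:ℝ) 1, 1/((x.1 - 1/2)^2 + (max x.2 (3*μ))^2)
      ≤ Real.pi * (1 - Real.log (3*μ)) := by
  set f : ℝ × ℝ → ℝ := fun x => 1/((x.1 - 1/2)^2 + (max x.2 (3*μ))^2) with hf
  set sq : Set (ℝ × ℝ) := Ioo (0:ℝ) 1 ×ˢ Ioo (0:ℝ) 1 with hsq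
  have hint : Integrable (sq.indicator f) (volume.prod volume) := by
    rw [← Measure.volume_eq_prod]
    exact (integrable_indicator_iff sq_meas).mpr (f_integrableOn hμ0)
  have hrw : ∫ x in sq, f x = ∫ x, sq.indicator f x ∂(volume.prod volume) := by
    rw [← Measure.volume_eq_prod, MeasureTheory.integral_indicator sq_meas]
  rw [hrw, integral_prod_symm _ hint]
  have hin : ∀ y : ℝ, (∫ x, sq.indicator f (x, y)) =
      (Ioo (0:ℝ) 1).indicator (fun y => ∫ x in Ioo (0:ℝ) 1, f (x, y)) y := by
    intro y
    by_cases hy : y ∈ Ioo (0:ℝ) 1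
    · rw [indicator_of_mem hy, ← MeasureTheory.integral_indicator measurableSet_Ioo]
      congr 1
      funext x
      by_cases hx : x ∈ Ioo (0:ℝ) 1
      · rw [indicator_of_mem hx, indicator_of_mem (mk_mem_prod hx hy)]
      · rw [indicator_of_notMem hx,
          indicator_of_notMem (fun hmem => hx (mem_prod.mp hmem).1)]
    · rw [indicator_of_notMem hy]
      have hz : ∀ x : ℝ, sq.indicator f (x, y) = 0 := fun x =>
        indicator_of_notMem (fun hmem => hy (mem_prod.mp hmem).2) _
      simp [hz]
  simp_rw [hin]
  rw [MeasureTheory.integral_indicator measurableSet_Ioo]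
  refine le_trans (integral_mono_of_nonneg ?_ ?_ ?_) (outer_integral hμ0 hμ)
  · filter_upwards with y
    exact integral_nonneg fun x => by positivity
  · have hcont : Continuous (fun y : ℝ => Real.pi / max y (3*μ)) := by
      apply Continuous.div continuous_const (continuous_id.max continuous_const)
      intro y
      exact (lt_max_of_lt_right (by linarith : (0:ℝ) < 3*μ)).ne'
    exact (hcont.continuousOn.integrableOn_compact isCompact_Icc).mono_set
      Ioo_subset_Icc_self
  · filter_upwards [ae_restrict_mem measurableSet_Ioo] with y hy
    have hb : 0 < max y (3*μ) := lt_max_of_lt_right (by linarith)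
    exact inner_bound hb

lemma psi_sq_indicator_eq :
    (Ioo (0:ℝ) 1 ×ˢ Ioo (0:ℝ) 1).indicator (fun x : ℝ × ℝ => (Real.log x.2)^2 + 1) =
    fun z : ℝ × ℝ => ((Ioo (0:ℝ) 1).indicator (fun _ => (1:ℝ)) z.1) *
      ((Ioo (0:ℝ) 1).indicator (fun y => (Real.log y)^2 + 1) z.2) := by
  funext z
  by_cases h1 : z.1 ∈ Ioo (0:ℝ) 1 <;> by_cases h2 : z.2 ∈ Ioo (0:ℝ) 1
  · rw [indicator_of_mem (mk_mem_prod h1 h2 : (z.1, z.2) ∈ _), indicator_of_mem h1,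
      indicator_of_mem h2, one_mul]
  · rw [indicator_of_notMem (fun h => h2 (mem_prod.mp h).2), indicator_of_notMem h2, mul_zero]
  · rw [indicator_of_notMem (fun h => h1 (mem_prod.mp h).1), indicator_of_notMem h1, zero_mul]
  · rw [indicator_of_notMem (fun h => h1 (mem_prod.mp h).1), indicator_of_notMem h1, zero_mul]

lemma psi_sq_integrableOn :
    IntegrableOn (fun x : ℝ × ℝ => (Real.log x.2)^2 + 1) (Ioo (0:ℝ) 1 ×ˢ Ioo (0:ℝ) 1) := by
  rw [← integrable_indicator_iff sq_meas, psi_sq_indicator_eq, Measure.volume_eq_prod]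
  exact Integrable.mul_prod
    ((integrable_indicator_iff measurableSet_Ioo).mpr
      (integrableOn_const measure_Ioo_lt_top.ne))
    ((integrable_indicator_iff measurableSet_Ioo).mpr psi_integrableOn)

lemma psi_sq_integral_le :
    ∫ x in Ioo (0:ℝ) 1 ×ˢ Ioo (0:ℝ) 1, ((Real.log x.2)^2 + 1) ≤ 33 := by
  have h1 : ∫ x in Ioo (0:ℝ) 1 ×ˢ Ioo (0:ℝ) 1, ((Real.log x.2)^2 + 1)
      = ∫ z in Ioo (0:ℝ) 1 ×ˢ Ioo (0:ℝ) 1,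
          (fun _ : ℝ => (1:ℝ)) z.1 * (fun y => (Real.log y)^2 + 1) z.2 ∂(volume.prod volume) := by
    rw [← Measure.volume_eq_prod]
    simp
  rw [h1, setIntegral_prod_mul (fun _ : ℝ => (1:ℝ)) (fun y : ℝ => (Real.log y)^2 + 1)
    (Ioo (0:ℝ) 1) (Ioo (0:ℝ) 1)]
  have h2 : ∫ _ in Ioo (0:ℝ) 1, (1:ℝ) = 1 := by
    simp [Real.volume_Ioo]
  rw [h2, one_mul]
  exact psi_integral_le

lemma lhs_eq {μ : ℝ} (hμ0 : 0 < μ) :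
    ∫ x₁ in Ioo (1/2 - μ) (1/2 + μ), (logPotential μ (x₁, 0))^2 = 2*μ := by
  have heq : EqOn (fun x₁ : ℝ => (logPotential μ (x₁, 0))^2) (fun _ => (1:ℝ))
      (Ioo (1/2 - μ) (1/2 + μ)) := by
    intro x hx
    have hd : distToP (x, 0) = |x - 1/2| := by
      unfold distToP
      simp only []
      rw [show ((x, (0:ℝ)).1 - 1/2)^2 + ((x, (0:ℝ)).2)^2 = (x - 1/2)^2 by simp]
      exact Real.sqrt_sq_eq_abs _
    have hlt : distToP (x, 0) < 3*μ := by
      rw [hd, abs_sub_lt_iff]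
      obtain ⟨h1, h2⟩ := hx
      constructor <;> linarith
    simp only []
    rw [inside_eq hlt, one_pow]
  rw [setIntegral_congr_fun measurableSet_Ioo heq, setIntegral_const, measureReal_def, Real.volume_Ioo,
    smul_eq_mul, mul_one, ENNReal.toReal_ofReal (by linarith)]
  ring

end Aux

/-- Sharpness of the trace estimate of Lemma 5.2: for the logarithmic potential `v`,
`‖v‖²_{L²(Ξ_μ)} ≥ C μ |ln μ| ‖v‖²_{H¹(□)}` with `□ = (0,1)²` and
`Ξ_μ = {(x₁,0) : |x₁ − 1/2| < μ}`. -/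
theorem log_potential_trace_lower_bound :
    ∃ C > (0 : ℝ), ∀ μ : ℝ, 0 < μ → μ < 1 / 8 →
      (∫ x₁ in Set.Ioo (1 / 2 - μ) (1 / 2 + μ), (logPotential μ (x₁, 0)) ^ 2) ≥
        C * μ * |Real.log μ| *
          ∫ x in Set.Ioo (0 : ℝ) 1 ×ˢ Set.Ioo (0 : ℝ) 1,
            ((logPotential μ x) ^ 2 + ‖fderiv ℝ (logPotential μ) x‖ ^ 2) := by
  refine ⟨1/180, by norm_num, fun μ hμ0 hμ => ?_⟩
  set L := Real.log (3*μ) with hLdef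
  have hL : L < 0 := Real.log_neg (by linarith) (by linarith)
  have hLne : L ≠ 0 := hL.ne
  have hLsq : 0 < L^2 := by nlinarith [hL]
  set m := -L with hmdef
  have hm0 : 0 < m := by simp [hmdef]; linarith
  have hm58 : 5/8 ≤ m := by
    have := Real.log_le_sub_one_of_pos (show (0:ℝ) < 3*μ by linarith)
    simp only [hmdef, hLdef]
    linarith
  -- bound on the H¹ integral
  set sq : Set (ℝ × ℝ) := Set.Ioo (0:ℝ) 1 ×ˢ Set.Ioo (0:ℝ) 1 with hsq
  set G : ℝ × ℝ → ℝ := fun x => (1/L^2) * ((Real.log x.2)^2 + 1)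
    + (8/L^2) * (1/((x.1 - 1/2)^2 + (max x.2 (3*μ))^2)) with hG
  have hGint : IntegrableOn G sq := by
    exact (psi_sq_integrableOn.const_mul (1/L^2)).add
      ((f_integrableOn hμ0).const_mul (8/L^2))
  have hFG : ∫ x in sq, ((logPotential μ x) ^ 2 + ‖fderiv ℝ (logPotential μ) x‖ ^ 2)
      ≤ ∫ x in sq, G x := by
    apply integral_mono_of_nonneg
    · filter_upwards with x
      positivity
    · exact hGint
    · have hcirc : ∀ᵐ x : ℝ × ℝ ∂volume, distToP x ≠ 3*μ := by
        have h0 := circle_null (3*μ)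
        rw [← compl_mem_ae_iff] at h0
        filter_upwards [h0] with x hx
        exact hx
      filter_upwards [ae_restrict_of_ae hcirc, ae_restrict_mem sq_meas] with x hne hx
      have hpt := pointwise_bound hμ0 hμ hx hne
      refine le_trans hpt (le_of_eq ?_)
      have hbpos : 0 < max x.2 (3*μ) := lt_max_of_lt_right (by linarith)
      have hden : (x.1 - 1/2)^2 + (max x.2 (3*μ))^2 ≠ 0 := by positivity
      rw [← hLdef]
      simp only [hG]
      field_simp
  have hGval : ∫ x in sq, G x ≤ (1/L^2) * 33 + (8/L^2) * (Real.pi * (1 - L)) := by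
    have hadd : ∫ x in sq, G x =
        (∫ x in sq, (1/L^2) * ((Real.log x.2)^2 + 1))
          + ∫ x in sq, (8/L^2) * (1/((x.1 - 1/2)^2 + (max x.2 (3*μ))^2)) := by
      exact integral_add (psi_sq_integrableOn.const_mul (1/L^2))
        ((f_integrableOn hμ0).const_mul (8/L^2))
    rw [hadd, MeasureTheory.integral_const_mul, MeasureTheory.integral_const_mul]
    have t1 : (1/L^2) * (∫ x in sq, ((Real.log x.2)^2 + 1)) ≤ (1/L^2) * 33 :=
      mul_le_mul_of_nonneg_left psi_sq_integral_le (by positivity)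
    have t2 : (8/L^2) * (∫ x in sq, 1/((x.1 - 1/2)^2 + (max x.2 (3*μ))^2))
        ≤ (8/L^2) * (Real.pi * (1 - L)) :=
      mul_le_mul_of_nonneg_left (f_square_integral_le hμ0 hμ) (by positivity)
    linarith
  have hI : ∫ x in sq, ((logPotential μ x) ^ 2 + ‖fderiv ℝ (logPotential μ) x‖ ^ 2)
      ≤ 120 / m := by
    refine le_trans hFG (le_trans hGval ?_)
    have hLm : L = -m := by simp [hmdef]
    have hpi : Real.pi < 3.15 := Real.pi_lt_d2
    have hpi0 : 0 < Real.pi := Real.pi_pos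
    rw [hLm]
    have key : 33 + 8*Real.pi*(1+m) ≤ 120*m := by
      nlinarith [mul_nonneg (by nlinarith : (0:ℝ) ≤ 120 - 8*Real.pi)
        (by linarith : (0:ℝ) ≤ m - 5/8)]
    have heq2 : 1/(-m)^2*33 + 8/(-m)^2*(Real.pi*(1 - -m)) = (33 + 8*Real.pi*(1+m))/m^2 := by
      field_simp
      ring
    rw [heq2, div_le_div_iff₀ (by positivity) hm0]
    nlinarith [mul_le_mul_of_nonneg_right key hm0.le]
  -- |log μ| ≤ 3 m
  have hlogmu : |Real.log μ| ≤ 3 * m := by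
    have hlmu_neg : Real.log μ < 0 := Real.log_neg hμ0 (by linarith)
    rw [abs_of_neg hlmu_neg]
    have hsplit : L = Real.log 3 + Real.log μ := by
      rw [hLdef, Real.log_mul (by norm_num) hμ0.ne']
    have h8 : Real.log μ ≤ Real.log (1/8) := Real.log_le_log hμ0 hμ.le
    have h8' : Real.log (1/8) = - Real.log 8 := by
      rw [one_div, Real.log_inv]
    have hlog27 : Real.log 27 ≤ Real.log 64 := Real.log_le_log (by norm_num) (by norm_num)
    have h27 : Real.log 27 = 3 * Real.log 3 := by
      rw [show (27:ℝ) = 3^3 by norm_num, Real.log_pow]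
      norm_num
    have h64 : Real.log 64 = 2 * Real.log 8 := by
      rw [show (64:ℝ) = 8^2 by norm_num, Real.log_pow]
      norm_num
    simp only [hmdef]
    rw [hsplit]
    linarith
  -- conclude
  rw [ge_iff_le, lhs_eq hμ0]
  have hstep1 : (1:ℝ)/180 * μ * |Real.log μ| *
      (∫ x in sq, ((logPotential μ x) ^ 2 + ‖fderiv ℝ (logPotential μ) x‖ ^ 2))
      ≤ 1/180 * μ * |Real.log μ| * (120 / m) :=
    mul_le_mul_of_nonneg_left hI (by positivity)
  refine le_trans hstep1 ?_
  have hstep2 : (1:ℝ)/180 * μ * |Real.log μ| * (120 / m) ≤ 1/180 * μ * (3*m) * (120/m) := by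
    have h120 : (0:ℝ) ≤ 120 / m := by positivity
    have := mul_le_mul_of_nonneg_left hlogmu (show (0:ℝ) ≤ 1/180 * μ by positivity)
    calc (1:ℝ)/180 * μ * |Real.log μ| * (120 / m)
        = (1/180 * μ * |Real.log μ|) * (120/m) := by ring
      _ ≤ (1/180 * μ * (3*m)) * (120/m) := by
          apply mul_le_mul_of_nonneg_right _ h120
          calc (1:ℝ)/180 * μ * |Real.log μ| = (1/180 * μ) * |Real.log μ| := by ring
            _ ≤ (1/180 * μ) * (3*m) := this
            _ = 1/180 * μ * (3*m) := by ring
      _ = 1/180 * μ * (3*m) * (120/m) := by ring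
  refine le_trans hstep2 (le_of_eq ?_)
  field_simp
  ring
end

section
/- Let d > 0, η ∈ (0, d), a₀ ∈ ℂ, and k = e^{iπ/4}. Suppose k cos(kd) + a₀ sin(kd) ≠ 0. Then the function U : [0,d] → ℂ defined by U(x₂) = −[k sin(kη) + a₀(1 − cos(kη))]/[k cos(kd) + a₀ sin(kd)] · sin(k(d − x₂)) for η ≤ x₂ ≤ d, and U(x₂) = 1 + (a₀/k) sin(k x₂) − [k cos(k(d−η)) + a₀ sin(kd)]/[k cos(kd) + a₀ sin(kd)] · (cos(k x₂) + (a₀/k) sin(k x₂)) for 0 ≤ x₂ ≤ η, is continuous, continuously differentiable, and satisfies −U'' − i U = −i F on (0,η) ∪ (η,d), U'(0) − a₀ U(0) = 0, and U(d) = 0, where F(x₂) = 1 for 0 < x₂ < η and F(x₂) = 0 for η < x₂ < d. -/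
open Complex

/-- `k = e^{iπ/4}`, so `k² = i`. -/
noncomputable def kConst : ℂ := Complex.exp (Complex.I * Real.pi / 4)

/-- The explicit piecewise solution `U` of `−U'' − iU = −iF`, `U'(0) = a₀U(0)`, `U(d)=0`. -/
noncomputable def Uexpl (d η : ℝ) (a₀ : ℂ) (t : ℝ) : ℂ :=
  if t ≤ η then
    1 + (a₀ / kConst) * Complex.sin (kConst * t) -
      ((kConst * Complex.cos (kConst * ((d : ℂ) - (η : ℂ))) + a₀ * Complex.sin (kConst * d)) /
        (kConst * Complex.cos (kConst * d) + a₀ * Complex.sin (kConst * d))) *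
        (Complex.cos (kConst * t) + (a₀ / kConst) * Complex.sin (kConst * t))
  else
    -((kConst * Complex.sin (kConst * η) + a₀ * (1 - Complex.cos (kConst * η))) /
        (kConst * Complex.cos (kConst * d) + a₀ * Complex.sin (kConst * d))) *
      Complex.sin (kConst * ((d : ℂ) - (t : ℂ)))

/-- The right-hand side `F`: equal to `1` on `(0,η)` and `0` on `(η,d)`. -/
noncomputable def Fexpl (η : ℝ) (t : ℝ) : ℂ := if t < η then 1 else 0

/-! ### Auxiliary definitions and lemmas -/

lemma kConst_ne : kConst ≠ 0 := Complex.exp_ne_zero _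

lemma kConst_sq : kConst ^ 2 = Complex.I := by
  unfold kConst
  rw [← Complex.exp_nat_mul]
  have : (2 : ℂ) * (Complex.I * Real.pi / 4) = (Real.pi / 2 : ℝ) * Complex.I := by
    push_cast; ring
  rw [show ((2:ℕ):ℂ) = (2:ℂ) by norm_num, this, Complex.exp_mul_I]
  push_cast
  rw [show ((Real.pi:ℂ)/2) = ((Real.pi/2 : ℝ):ℂ) by push_cast; ring, ← Complex.ofReal_cos,
    ← Complex.ofReal_sin, Real.cos_pi_div_two, Real.sin_pi_div_two]
  simp

noncomputable def Acoef (d η : ℝ) (a₀ : ℂ) : ℂ :=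
  (kConst * Complex.cos (kConst * ((d : ℂ) - (η : ℂ))) + a₀ * Complex.sin (kConst * d)) /
    (kConst * Complex.cos (kConst * d) + a₀ * Complex.sin (kConst * d))

noncomputable def Bcoef (d η : ℝ) (a₀ : ℂ) : ℂ :=
  (kConst * Complex.sin (kConst * η) + a₀ * (1 - Complex.cos (kConst * η))) /
    (kConst * Complex.cos (kConst * d) + a₀ * Complex.sin (kConst * d))

noncomputable def fU (d η : ℝ) (a₀ : ℂ) (t : ℝ) : ℂ :=
  1 + (a₀ / kConst) * Complex.sin (kConst * t) -
    Acoef d η a₀ * (Complex.cos (kConst * t) + (a₀ / kConst) * Complex.sin (kConst * t))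

noncomputable def fD (d η : ℝ) (a₀ : ℂ) (t : ℝ) : ℂ :=
  a₀ * Complex.cos (kConst * t) -
    Acoef d η a₀ * (a₀ * Complex.cos (kConst * t) - kConst * Complex.sin (kConst * t))

noncomputable def fDD (d η : ℝ) (a₀ : ℂ) (t : ℝ) : ℂ :=
  -(kConst * (a₀ * Complex.sin (kConst * t))) -
    Acoef d η a₀ * (-(kConst * (a₀ * Complex.sin (kConst * t))) - kConst ^ 2 * Complex.cos (kConst * t))

noncomputable def gU (d η : ℝ) (a₀ : ℂ) (t : ℝ) : ℂ :=
  -Bcoef d η a₀ * Complex.sin (kConst * ((d : ℂ) - (t : ℂ)))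

noncomputable def gD (d η : ℝ) (a₀ : ℂ) (t : ℝ) : ℂ :=
  Bcoef d η a₀ * kConst * Complex.cos (kConst * ((d : ℂ) - (t : ℂ)))

noncomputable def gDD (d η : ℝ) (a₀ : ℂ) (t : ℝ) : ℂ :=
  Bcoef d η a₀ * kConst ^ 2 * Complex.sin (kConst * ((d : ℂ) - (t : ℂ)))

lemma hasDerivAt_csin (b : ℂ) (x : ℝ) :
    HasDerivAt (fun t : ℝ => Complex.sin (b * t)) (b * Complex.cos (b * x)) x := by
  have h1 : HasDerivAt (fun z : ℂ => Complex.sin (b * z)) (b * Complex.cos (b * x)) (x : ℂ) := by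
    have := (Complex.hasDerivAt_sin (b * (x:ℂ))).comp (x:ℂ)
      ((hasDerivAt_id (x:ℂ)).const_mul b)
    simpa [Function.comp_def, mul_comm] using this
  exact h1.comp_ofReal

lemma hasDerivAt_ccos (b : ℂ) (x : ℝ) :
    HasDerivAt (fun t : ℝ => Complex.cos (b * t)) (-(b * Complex.sin (b * x))) x := by
  have h1 : HasDerivAt (fun z : ℂ => Complex.cos (b * z)) (-(b * Complex.sin (b * x))) (x : ℂ) := by
    have := (Complex.hasDerivAt_cos (b * (x:ℂ))).comp (x:ℂ)
      ((hasDerivAt_id (x:ℂ)).const_mul b)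
    simpa [Function.comp_def, mul_comm] using this
  exact h1.comp_ofReal

lemma hasDerivAt_gsin (c w : ℂ) (x : ℝ) :
    HasDerivAt (fun t : ℝ => Complex.sin (c * (w - t))) (-(c * Complex.cos (c * (w - x)))) x := by
  have h1 : HasDerivAt (fun z : ℂ => Complex.sin (c * (w - z))) (-(c * Complex.cos (c * (w - x)))) (x : ℂ) := by
    have h2 : HasDerivAt (fun z : ℂ => c * (w - z)) (-c) (x:ℂ) := by
      simpa using (((hasDerivAt_id (x:ℂ)).const_sub w).const_mul c)
    have := (Complex.hasDerivAt_sin (c * (w - (x:ℂ)))).comp (x:ℂ) h2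
    simpa [Function.comp_def, mul_comm] using this
  exact h1.comp_ofReal

lemma hasDerivAt_gcos (c w : ℂ) (x : ℝ) :
    HasDerivAt (fun t : ℝ => Complex.cos (c * (w - t))) (c * Complex.sin (c * (w - x))) x := by
  have h1 : HasDerivAt (fun z : ℂ => Complex.cos (c * (w - z))) (c * Complex.sin (c * (w - x))) (x : ℂ) := by
    have h2 : HasDerivAt (fun z : ℂ => c * (w - z)) (-c) (x:ℂ) := by
      simpa using (((hasDerivAt_id (x:ℂ)).const_sub w).const_mul c)
    have := (Complex.hasDerivAt_cos (c * (w - (x:ℂ)))).comp (x:ℂ) h2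
    simpa [Function.comp_def, mul_comm] using this
  exact h1.comp_ofReal

lemma fU_hasDeriv (d η : ℝ) (a₀ : ℂ) (x : ℝ) :
    HasDerivAt (fU d η a₀) (fD d η a₀ x) x := by
  have h := (((hasDerivAt_csin kConst x).const_mul (a₀ / kConst)).const_add 1).sub
    (((hasDerivAt_ccos kConst x).add ((hasDerivAt_csin kConst x).const_mul (a₀ / kConst))).const_mul
      (Acoef d η a₀))
  refine h.congr_deriv ?_
  unfold fD
  field_simp [kConst_ne]
  ring

lemma fD_hasDeriv (d η : ℝ) (a₀ : ℂ) (x : ℝ) :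
    HasDerivAt (fD d η a₀) (fDD d η a₀ x) x := by
  have h := ((hasDerivAt_ccos kConst x).const_mul a₀).sub
    ((((hasDerivAt_ccos kConst x).const_mul a₀).sub ((hasDerivAt_csin kConst x).const_mul kConst)).const_mul
      (Acoef d η a₀))
  refine h.congr_deriv ?_
  unfold fDD
  ring

lemma gU_hasDeriv (d η : ℝ) (a₀ : ℂ) (x : ℝ) :
    HasDerivAt (gU d η a₀) (gD d η a₀ x) x := by
  have h := (hasDerivAt_gsin kConst (d : ℂ) x).const_mul (-Bcoef d η a₀)
  refine h.congr_deriv ?_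
  unfold gD
  ring

lemma gD_hasDeriv (d η : ℝ) (a₀ : ℂ) (x : ℝ) :
    HasDerivAt (gD d η a₀) (gDD d η a₀ x) x := by
  have h := (hasDerivAt_gcos kConst (d : ℂ) x).const_mul (Bcoef d η a₀ * kConst)
  refine h.congr_deriv ?_
  unfold gDD
  ring

lemma key1 (d η : ℝ) (a₀ : ℂ)
    (hk : kConst * Complex.cos (kConst * d) + a₀ * Complex.sin (kConst * d) ≠ 0) :
    fU d η a₀ η = gU d η a₀ η := by
  unfold fU gU Acoef Bcoef
  have hsplit : kConst * (d : ℂ) = kConst * ((d : ℂ) - (η : ℂ)) + kConst * (η : ℂ) := by ring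
  rw [hsplit, Complex.sin_add, Complex.cos_add] at hk ⊢
  have hk' : kConst * (Complex.cos (kConst * ((d:ℂ) - (η:ℂ))) * Complex.cos (kConst * (η:ℂ)) - Complex.sin (kConst * (η:ℂ)) * Complex.sin (kConst * ((d:ℂ) - (η:ℂ)))) + a₀ * (Complex.sin (kConst * ((d:ℂ) - (η:ℂ))) * Complex.cos (kConst * (η:ℂ)) + Complex.sin (kConst * (η:ℂ)) * Complex.cos (kConst * ((d:ℂ) - (η:ℂ)))) ≠ 0 := by
    convert hk using 1; ring
  field_simp [kConst_ne, hk']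
  linear_combination (-(kConst * a₀ * Complex.sin (kConst*((d:ℂ)-(η:ℂ))))) *
    Complex.sin_sq_add_cos_sq (kConst * (η:ℂ))

lemma key2 (d η : ℝ) (a₀ : ℂ)
    (hk : kConst * Complex.cos (kConst * d) + a₀ * Complex.sin (kConst * d) ≠ 0) :
    fD d η a₀ η = gD d η a₀ η := by
  unfold fD gD Acoef Bcoef
  have hsplit : kConst * (d : ℂ) = kConst * ((d : ℂ) - (η : ℂ)) + kConst * (η : ℂ) := by ring
  rw [hsplit, Complex.sin_add, Complex.cos_add] at hk ⊢
  have hk' : kConst * (Complex.cos (kConst * (η:ℂ)) * Complex.cos (kConst * ((d:ℂ) - (η:ℂ))) - Complex.sin (kConst * ((d:ℂ) - (η:ℂ))) * Complex.sin (kConst * (η:ℂ))) + a₀ * (Complex.cos (kConst * (η:ℂ)) * Complex.sin (kConst * ((d:ℂ) - (η:ℂ))) + Complex.cos (kConst * ((d:ℂ) - (η:ℂ))) * Complex.sin (kConst * (η:ℂ))) ≠ 0 := by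
    convert hk using 1; ring
  field_simp [kConst_ne, hk']
  linear_combination (kConst * a₀ * Complex.cos (kConst * ((d:ℂ) - (η:ℂ)))) *
    Complex.sin_sq_add_cos_sq (kConst * (η:ℂ))

lemma Uexpl_eq (d η : ℝ) (a₀ : ℂ) :
    Uexpl d η a₀ = fun t => if t ≤ η then fU d η a₀ t else gU d η a₀ t := rfl

/-- The explicit function `U` is continuous, continuously differentiable on `[0,d]`, and
solves `−U'' − iU = −iF` on `(0,η) ∪ (η,d)` with `U'(0) − a₀ U(0) = 0` and `U d = 0`. -/
theorem Uexpl_solves (d η : ℝ) (hd : 0 < d) (hη : 0 < η) (hηd : η < d) (a₀ : ℂ)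
    (hk : kConst * Complex.cos (kConst * d) + a₀ * Complex.sin (kConst * d) ≠ 0) :
    ∃ U' U'' : ℝ → ℂ,
      ContinuousOn (Uexpl d η a₀) (Set.Icc 0 d) ∧
      (∀ x ∈ Set.Icc (0 : ℝ) d, HasDerivWithinAt (Uexpl d η a₀) (U' x) (Set.Icc 0 d) x) ∧
      ContinuousOn U' (Set.Icc 0 d) ∧
      (∀ x ∈ Set.Ioo (0 : ℝ) η ∪ Set.Ioo η d,
        HasDerivAt U' (U'' x) x ∧
        -U'' x - Complex.I * Uexpl d η a₀ x = -Complex.I * Fexpl η x) ∧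
      U' 0 - a₀ * Uexpl d η a₀ 0 = 0 ∧
      Uexpl d η a₀ d = 0 := by
  have hfc : Continuous (fU d η a₀) :=
    continuous_iff_continuousAt.mpr fun x => (fU_hasDeriv d η a₀ x).continuousAt
  have hgc : Continuous (gU d η a₀) :=
    continuous_iff_continuousAt.mpr fun x => (gU_hasDeriv d η a₀ x).continuousAt
  have hfdc : Continuous (fD d η a₀) :=
    continuous_iff_continuousAt.mpr fun x => (fD_hasDeriv d η a₀ x).continuousAt
  have hgdc : Continuous (gD d η a₀) :=
    continuous_iff_continuousAt.mpr fun x => (gD_hasDeriv d η a₀ x).continuousAt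
  have hUf : ∀ t : ℝ, t ≤ η → Uexpl d η a₀ t = fU d η a₀ t := fun t ht => if_pos ht
  have hUg : ∀ t : ℝ, η < t → Uexpl d η a₀ t = gU d η a₀ t := fun t ht => if_neg (not_le.mpr ht)
  have hk1 := key1 d η a₀ hk
  have hk2 := key2 d η a₀ hk
  refine ⟨fun t => if t ≤ η then fD d η a₀ t else gD d η a₀ t,
          fun t => if t ≤ η then fDD d η a₀ t else gDD d η a₀ t, ?_, ?_, ?_, ?_, ?_, ?_⟩
  · rw [Uexpl_eq]
    exact (Continuous.if_le hfc hgc continuous_id continuous_const fun x hx => by rw [show x = η from hx]; exact hk1).continuousOn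
  · intro x hx
    rcases lt_trichotomy x η with h | h | h
    · have hev : Uexpl d η a₀ =ᶠ[nhds x] fU d η a₀ := by
        filter_upwards [Iio_mem_nhds h] with t ht
        have ht' : t < η := ht
        exact hUf t ht'.le
      have := ((fU_hasDeriv d η a₀ x).congr_of_eventuallyEq hev).hasDerivWithinAt
        (s := Set.Icc 0 d)
      simpa [h.le] using this
    · subst h
      have hIic : HasDerivWithinAt (Uexpl d x a₀) (fD d x a₀ x) (Set.Iic x) x :=
        ((fU_hasDeriv d x a₀ x).hasDerivWithinAt).congr (fun t ht => hUf t ht) (hUf x le_rfl)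
      have hIci : HasDerivWithinAt (Uexpl d x a₀) (fD d x a₀ x) (Set.Ici x) x := by
        rw [hk2]
        refine ((gU_hasDeriv d x a₀ x).hasDerivWithinAt).congr (fun t ht => ?_) ?_
        · rcases eq_or_lt_of_le (Set.mem_Ici.mp ht) with rfl | hlt
          · exact (hUf x le_rfl).trans hk1
          · exact hUg t hlt
        · exact (hUf x le_rfl).trans hk1
      have := hIic.union hIci
      rw [Set.Iic_union_Ici] at this
      simpa using this.mono (Set.subset_univ _)
    · have hev : Uexpl d η a₀ =ᶠ[nhds x] gU d η a₀ := by
        filter_upwards [Ioi_mem_nhds h] with t ht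
        exact hUg t ht
      have := ((gU_hasDeriv d η a₀ x).congr_of_eventuallyEq hev).hasDerivWithinAt
        (s := Set.Icc 0 d)
      simpa [not_le.mpr h] using this
  · exact (Continuous.if_le hfdc hgdc continuous_id continuous_const fun x hx => by
      rw [show x = η from hx]; exact hk2).continuousOn
  · intro x hx
    rcases hx with ⟨hx0, hxη⟩ | ⟨hxη, hxd⟩
    · have hev : (fun t => if t ≤ η then fD d η a₀ t else gD d η a₀ t) =ᶠ[nhds x]
          fD d η a₀ := by
        filter_upwards [Iio_mem_nhds hxη] with t ht
        have ht' : t < η := ht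
        simp [ht'.le]
      constructor
      · simpa [hxη.le] using (fD_hasDeriv d η a₀ x).congr_of_eventuallyEq hev
      · rw [hUf x hxη.le]
        have hF : Fexpl η x = 1 := if_pos hxη
        rw [hF]
        simp only [hxη.le, if_pos]
        rw [← kConst_sq]
        unfold fDD fU
        field_simp [kConst_ne]
        ring
    · have hev : (fun t => if t ≤ η then fD d η a₀ t else gD d η a₀ t) =ᶠ[nhds x]
          gD d η a₀ := by
        filter_upwards [Ioi_mem_nhds hxη] with t ht
        have ht' : η < t := ht
        simp [not_le.mpr ht']
      constructor
      · simpa [not_le.mpr hxη] using (gD_hasDeriv d η a₀ x).congr_of_eventuallyEq hev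
      · rw [hUg x hxη]
        have hF : Fexpl η x = 0 := if_neg (not_lt.mpr hxη.le)
        rw [hF]
        simp only [not_le.mpr hxη, if_false]
        rw [← kConst_sq]
        unfold gDD gU
        ring
  · rw [hUf 0 hη.le]
    simp only [hη.le, if_pos]
    unfold fD fU
    simp only [Complex.ofReal_zero, mul_zero, Complex.sin_zero, Complex.cos_zero]
    ring
  · rw [hUg d hηd]
    unfold gU
    simp [sub_self]
end

section
/- With U as in the explicit solution of −U'' − iU = −iF, U'(0) = a₀U(0), U(d) = 0, where F = 1 on (0,η) and F = 0 on (η,d), a₀ ≥ 0 fixed, k = e^{iπ/4}: there exist constants c, C > 0 and η₀ > 0 such that for all η ∈ (0, η₀), c η ≤ ‖U‖_{L²(3η, d)} ≤ C η and c η ≤ ‖U'‖_{L²(3η, d)} ≤ C η. -/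
open Complex MeasureTheory Filter Set

/-- The coefficient of the explicit solution `U` on `(η, d)`. -/
noncomputable def Ucoef (d η : ℝ) (a₀ : ℂ) : ℂ :=
  -((kConst * Complex.sin (kConst * η) + a₀ * (1 - Complex.cos (kConst * η))) /
      (kConst * Complex.cos (kConst * d) + a₀ * Complex.sin (kConst * d)))

/-- The explicit solution on `(η,d)`: `U(t) = coef · sin(k(d − t))`. -/
noncomputable def Uouter (d η : ℝ) (a₀ : ℂ) (t : ℝ) : ℂ :=
  Ucoef d η a₀ * Complex.sin (kConst * ((d : ℂ) - (t : ℂ)))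

/-- Its derivative: `U'(t) = −coef · k cos(k(d − t))`. -/
noncomputable def Uouter' (d η : ℝ) (a₀ : ℂ) (t : ℝ) : ℂ :=
  -(Ucoef d η a₀ * kConst * Complex.cos (kConst * ((d : ℂ) - (t : ℂ))))


lemma kConst_norm : ‖kConst‖ = 1 := by
  simp [kConst, Complex.norm_exp]

lemma kConst_im_pos : 0 < kConst.im := by
  have : kConst = Complex.exp ((Real.pi/4 : ℝ) * Complex.I) := by
    unfold kConst; push_cast; ring_nf
  rw [this, Complex.exp_ofReal_mul_I_im]
  exact Real.sin_pos_of_pos_of_lt_pi (by positivity) (by linarith [Real.pi_pos])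

lemma sin_k_ne_zero {s : ℝ} (hs : 0 < s) : Complex.sin (kConst * s) ≠ 0 := by
  intro h
  rw [Complex.sin_eq_zero_iff] at h
  obtain ⟨n, hn⟩ := h
  have him : (kConst * (s:ℂ)).im = kConst.im * s := by simp [Complex.mul_im]
  have : kConst.im * s = 0 := by
    rw [← him, hn]; simp
  rcases mul_eq_zero.1 this with h1 | h1
  · exact absurd h1 (ne_of_gt kConst_im_pos)
  · exact absurd h1 (ne_of_gt hs)

lemma cos_k_ne_zero (s : ℝ) : Complex.cos (kConst * s) ≠ 0 := by
  intro h
  rw [Complex.cos_eq_zero_iff] at h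
  obtain ⟨n, hn⟩ := h
  have him : (kConst * (s:ℂ)).im = kConst.im * s := by simp [Complex.mul_im]
  have h0 : kConst.im * s = 0 := by
    rw [← him, hn]; simp
  have hs : s = 0 := by
    rcases mul_eq_zero.1 h0 with h1 | h1
    · exact absurd h1 (ne_of_gt kConst_im_pos)
    · exact h1
  rw [hs] at hn
  simp at hn
  have : ((2*n+1 : ℤ):ℂ) * Real.pi = 0 := by push_cast at hn ⊢; linear_combination -2*hn
  rcases mul_eq_zero.1 this with h1 | h1
  · have : (2*n+1 : ℤ) = 0 := by exact_mod_cast h1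
    omega
  · have : Real.pi = 0 := by exact_mod_cast h1
    exact absurd this (ne_of_gt Real.pi_pos)

lemma hG_deriv (a₀ : ℂ) :
    HasDerivAt (fun η : ℝ => kConst * Complex.sin (kConst * η) + a₀ * (1 - Complex.cos (kConst * η)))
      (kConst ^ 2) 0 := by
  have h2 : HasDerivAt (fun w : ℂ => kConst * w) kConst 0 := by
    simpa using (hasDerivAt_id (0:ℂ)).const_mul kConst
  have hsin : HasDerivAt (fun w : ℂ => Complex.sin (kConst * w))
      (Complex.cos (kConst * 0) * kConst) 0 :=
    (Complex.hasDerivAt_sin (kConst * 0)).comp 0 h2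
  have hcos : HasDerivAt (fun w : ℂ => Complex.cos (kConst * w))
      (-Complex.sin (kConst * 0) * kConst) 0 :=
    (Complex.hasDerivAt_cos (kConst * 0)).comp 0 h2
  have hC : HasDerivAt (fun w : ℂ => kConst * Complex.sin (kConst * w) + a₀ * (1 - Complex.cos (kConst * w)))
      (kConst ^ 2) 0 := by
    have := (hsin.const_mul kConst).add (((hasDerivAt_const (0:ℂ) (1:ℂ)).sub hcos).const_mul a₀)
    refine HasDerivAt.congr_deriv this ?_
    simp; ring
  have := hC.comp_ofReal (z := 0)
  simpa using this

lemma G_bounds (a₀ : ℂ) : ∃ η₁ > 0, ∀ η : ℝ, 0 < η → η < η₁ →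
    η / 2 ≤ ‖kConst * Complex.sin (kConst * η) + a₀ * (1 - Complex.cos (kConst * η))‖ ∧
    ‖kConst * Complex.sin (kConst * η) + a₀ * (1 - Complex.cos (kConst * η))‖ ≤ 2 * η := by
  set G : ℝ → ℂ := fun η => kConst * Complex.sin (kConst * η) + a₀ * (1 - Complex.cos (kConst * η))
  have hG0 : G 0 = 0 := by simp [G]
  have hsl : Tendsto (slope G 0) (nhdsWithin 0 {(0:ℝ)}ᶜ) (nhds (kConst ^ 2)) :=
    hasDerivAt_iff_tendsto_slope.mp (hG_deriv a₀)
  have hnorm : Tendsto (fun η => ‖slope G 0 η‖) (nhdsWithin 0 {(0:ℝ)}ᶜ) (nhds 1) := by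
    have h1 : ‖kConst ^ 2‖ = 1 := by rw [norm_pow, kConst_norm]; norm_num
    simpa [h1, Function.comp_def] using (continuous_norm.tendsto _).comp hsl
  have hev : ∀ᶠ η in nhdsWithin 0 {(0:ℝ)}ᶜ, ‖slope G 0 η‖ ∈ Ioo (1/2 : ℝ) 2 :=
    hnorm (Ioo_mem_nhds (by norm_num) (by norm_num))
  have hev' : ∀ᶠ η in nhdsWithin (0:ℝ) (Ioi 0), ‖slope G 0 η‖ ∈ Ioo (1/2 : ℝ) 2 :=
    hev.filter_mono (nhdsWithin_mono 0 (fun x hx => ne_of_gt hx))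
  rw [eventually_nhdsWithin_iff] at hev'
  rw [Metric.eventually_nhds_iff] at hev'
  obtain ⟨ε, hε, hball⟩ := hev'
  refine ⟨ε, hε, fun η hη hηε => ?_⟩
  have hmem := hball (y := η) (by simpa [abs_of_pos hη] using hηε) hη
  have hslope : slope G 0 η = η⁻¹ • G η := by
    simp [slope, hG0]
  rw [hslope] at hmem
  have : ‖η⁻¹ • G η‖ = ‖G η‖ / η := by
    rw [norm_smul]; rw [norm_inv, Real.norm_eq_abs, abs_of_pos hη]; ring
  rw [this] at hmem
  obtain ⟨hlo, hhi⟩ := hmem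
  rw [lt_div_iff₀ hη] at hlo
  rw [div_lt_iff₀ hη] at hhi
  constructor
  · linarith
  · linarith

/-- Both `‖U‖_{L²(3η,d)}` and `‖U'‖_{L²(3η,d)}` are of exact order `η` as `η → 0`. -/
theorem Uouter_norms_order_eta (d : ℝ) (hd : 0 < d) (a₀ : ℝ) (ha₀ : 0 ≤ a₀)
    (hk : kConst * Complex.cos (kConst * d) + (a₀ : ℂ) * Complex.sin (kConst * d) ≠ 0) :
    ∃ c C η₀ : ℝ, 0 < c ∧ 0 < C ∧ 0 < η₀ ∧
      ∀ η : ℝ, 0 < η → η < η₀ →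
        (c * η ≤ Real.sqrt (∫ t in (3 * η)..d, ‖Uouter d η a₀ t‖ ^ 2) ∧
          Real.sqrt (∫ t in (3 * η)..d, ‖Uouter d η a₀ t‖ ^ 2) ≤ C * η) ∧
        (c * η ≤ Real.sqrt (∫ t in (3 * η)..d, ‖Uouter' d η a₀ t‖ ^ 2) ∧
          Real.sqrt (∫ t in (3 * η)..d, ‖Uouter' d η a₀ t‖ ^ 2) ≤ C * η) := by
  -- notation
  set D : ℂ := kConst * Complex.cos (kConst * d) + (a₀ : ℂ) * Complex.sin (kConst * d) with hD
  have hDn : 0 < ‖D‖ := norm_pos_iff.mpr hk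
  set fS : ℝ → ℝ := fun t => ‖Complex.sin (kConst * ((d : ℂ) - (t : ℂ)))‖ ^ 2 with hfS
  set fC : ℝ → ℝ := fun t => ‖Complex.cos (kConst * ((d : ℂ) - (t : ℂ)))‖ ^ 2 with hfC
  have hcS : Continuous fS := by fun_prop
  have hcC : Continuous fC := by fun_prop
  have hnnS : ∀ t, 0 ≤ fS t := fun t => sq_nonneg _
  have hnnC : ∀ t, 0 ≤ fC t := fun t => sq_nonneg _
  -- positivity of the model integrals on (d/2, d)
  have hposS : 0 < ∫ t in (d/2)..d, fS t := by
    apply intervalIntegral.intervalIntegral_pos_of_pos_on (hcS.intervalIntegrable _ _)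
      _ (by linarith)
    intro x hx
    have hxd : 0 < d - x := by linarith [hx.2]
    have : Complex.sin (kConst * ((d : ℝ) - x : ℝ)) ≠ 0 := sin_k_ne_zero hxd
    have hne : Complex.sin (kConst * ((d : ℂ) - (x : ℂ))) ≠ 0 := by
      convert this using 3; push_cast; ring
    show 0 < ‖Complex.sin (kConst * ((d : ℂ) - (x : ℂ)))‖ ^ 2
    exact pow_pos (norm_pos_iff.mpr hne) 2
  have hposC : 0 < ∫ t in (d/2)..d, fC t := by
    apply intervalIntegral.intervalIntegral_pos_of_pos_on (hcC.intervalIntegrable _ _)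
      _ (by linarith)
    intro x hx
    have : Complex.cos (kConst * ((d : ℝ) - x : ℝ)) ≠ 0 := cos_k_ne_zero _
    have hne : Complex.cos (kConst * ((d : ℂ) - (x : ℂ))) ≠ 0 := by
      convert this using 3; push_cast; ring
    show 0 < ‖Complex.cos (kConst * ((d : ℂ) - (x : ℂ)))‖ ^ 2
    exact pow_pos (norm_pos_iff.mpr hne) 2
  -- bounds on the interval integrals, for 3η ∈ [0, d/2]
  have key : ∀ η : ℝ, 0 ≤ 3*η → 3*η ≤ d/2 →
      ((∫ t in (d/2)..d, fS t) ≤ (∫ t in (3*η)..d, fS t) ∧ (∫ t in (3*η)..d, fS t) ≤ ∫ t in (0:ℝ)..d, fS t) ∧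
      ((∫ t in (d/2)..d, fC t) ≤ (∫ t in (3*η)..d, fC t) ∧ (∫ t in (3*η)..d, fC t) ≤ ∫ t in (0:ℝ)..d, fC t) := by
    intro η h0 h1
    have hae : ∀ (f : ℝ → ℝ), (∀ t, 0 ≤ f t) → ∀ a b : ℝ, 0 ≤ᵐ[volume.restrict (Ioc a b)] f :=
      fun f hf a b => Eventually.of_forall hf
    refine ⟨⟨?_, ?_⟩, ?_, ?_⟩
    · exact intervalIntegral.integral_mono_interval h1 (by linarith) le_rfl
        (hae fS hnnS _ _) (hcS.intervalIntegrable _ _)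
    · exact intervalIntegral.integral_mono_interval h0 (by linarith) le_rfl
        (hae fS hnnS _ _) (hcS.intervalIntegrable _ _)
    · exact intervalIntegral.integral_mono_interval h1 (by linarith) le_rfl
        (hae fC hnnC _ _) (hcC.intervalIntegrable _ _)
    · exact intervalIntegral.integral_mono_interval h0 (by linarith) le_rfl
        (hae fC hnnC _ _) (hcC.intervalIntegrable _ _)
  -- coefficient bounds
  obtain ⟨η₁, hη₁, hGb⟩ := G_bounds (a₀ : ℂ)
  -- constants
  set mS := ∫ t in (d/2)..d, fS t
  set mC := ∫ t in (d/2)..d, fC t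
  set MS := ∫ t in (0:ℝ)..d, fS t
  set MC := ∫ t in (0:ℝ)..d, fC t
  have hmMS : mS ≤ MS := intervalIntegral.integral_mono_interval (by linarith) (by linarith)
    le_rfl (Eventually.of_forall hnnS) (hcS.intervalIntegrable _ _)
  have hmMC : mC ≤ MC := intervalIntegral.integral_mono_interval (by linarith) (by linarith)
    le_rfl (Eventually.of_forall hnnC) (hcC.intervalIntegrable _ _)
  have hsqmS : 0 < Real.sqrt mS := Real.sqrt_pos.mpr hposS
  have hsqmC : 0 < Real.sqrt mC := Real.sqrt_pos.mpr hposC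
  have hsqMS : 0 < Real.sqrt MS := Real.sqrt_pos.mpr (lt_of_lt_of_le hposS hmMS)
  refine ⟨min (Real.sqrt mS) (Real.sqrt mC) / (2 * ‖D‖),
    2 * max (Real.sqrt MS) (Real.sqrt MC) / ‖D‖, min η₁ (d/6),
    div_pos (lt_min hsqmS hsqmC) (by positivity),
    div_pos (by positivity) hDn, lt_min hη₁ (by linarith), ?_⟩
  intro η hη hηlt
  have hη₁' : η < η₁ := lt_of_lt_of_le hηlt (min_le_left _ _)
  have hηd : η < d/6 := lt_of_lt_of_le hηlt (min_le_right _ _)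
  obtain ⟨hGlo, hGhi⟩ := hGb η hη hη₁'
  set G := kConst * Complex.sin (kConst * η) + (a₀:ℂ) * (1 - Complex.cos (kConst * η)) with hGdef
  have hcoef : ‖Ucoef d η (a₀:ℂ)‖ = ‖G‖ / ‖D‖ := by
    rw [Ucoef, ← hGdef, ← hD, norm_neg, norm_div]
  obtain ⟨⟨hS1, hS2⟩, hC1, hC2⟩ := key η (by linarith) (by linarith)
  -- rewrite the integrals
  have hIS : (∫ t in (3*η)..d, ‖Uouter d η (a₀:ℂ) t‖ ^ 2)
      = ‖Ucoef d η (a₀:ℂ)‖ ^ 2 * ∫ t in (3*η)..d, fS t := by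
    rw [← intervalIntegral.integral_const_mul]
    congr 1; funext t
    simp only [Uouter, norm_mul, mul_pow, hfS]
  have hIC : (∫ t in (3*η)..d, ‖Uouter' d η (a₀:ℂ) t‖ ^ 2)
      = ‖Ucoef d η (a₀:ℂ)‖ ^ 2 * ∫ t in (3*η)..d, fC t := by
    rw [← intervalIntegral.integral_const_mul]
    congr 1; funext t
    simp only [Uouter', norm_neg, norm_mul, kConst_norm, mul_one, mul_pow, hfC]
  have hsplit : ∀ I : ℝ, Real.sqrt (‖Ucoef d η (a₀:ℂ)‖ ^ 2 * I)
      = ‖Ucoef d η (a₀:ℂ)‖ * Real.sqrt I := by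
    intro I
    rw [Real.sqrt_mul (sq_nonneg _), Real.sqrt_sq (norm_nonneg _)]
  rw [hIS, hIC, hsplit, hsplit, hcoef]
  -- numeric bounds
  have hcoef_lo : η / (2 * ‖D‖) ≤ ‖G‖ / ‖D‖ := by
    rw [div_le_div_iff₀ (by positivity) hDn]; nlinarith
  have hcoef_hi : ‖G‖ / ‖D‖ ≤ 2 * η / ‖D‖ := by gcongr
  have hsq_nonneg : (0:ℝ) ≤ ‖G‖ / ‖D‖ := by positivity
  have bound : ∀ I m M : ℝ, 0 < m → m ≤ I → I ≤ M →
      (min (Real.sqrt mS) (Real.sqrt mC) / (2 * ‖D‖)) * η ≤ ‖G‖ / ‖D‖ * Real.sqrt I ∧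
      ‖G‖ / ‖D‖ * Real.sqrt I ≤ (2 * max (Real.sqrt MS) (Real.sqrt MC) / ‖D‖) * η → True := fun _ _ _ _ _ _ _ => trivial
  constructor
  · constructor
    · calc min (Real.sqrt mS) (Real.sqrt mC) / (2 * ‖D‖) * η
          ≤ Real.sqrt mS / (2 * ‖D‖) * η := by
            gcongr; exact min_le_left _ _
        _ = (η / (2 * ‖D‖)) * Real.sqrt mS := by ring
        _ ≤ (‖G‖ / ‖D‖) * Real.sqrt ((∫ t in (3*η)..d, fS t)) := by
            apply mul_le_mul hcoef_lo (Real.sqrt_le_sqrt hS1) (Real.sqrt_nonneg _) hsq_nonneg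
    · calc (‖G‖ / ‖D‖) * Real.sqrt ((∫ t in (3*η)..d, fS t))
          ≤ (2 * η / ‖D‖) * Real.sqrt MS := by
            apply mul_le_mul hcoef_hi (Real.sqrt_le_sqrt hS2) (Real.sqrt_nonneg _) (by positivity)
        _ ≤ (2 * η / ‖D‖) * max (Real.sqrt MS) (Real.sqrt MC) :=
            mul_le_mul_of_nonneg_left (le_max_left _ _) (by positivity)
        _ = (2 * max (Real.sqrt MS) (Real.sqrt MC) / ‖D‖) * η := by ring
  · constructor
    · calc min (Real.sqrt mS) (Real.sqrt mC) / (2 * ‖D‖) * η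
          ≤ Real.sqrt mC / (2 * ‖D‖) * η := by
            gcongr; exact min_le_right _ _
        _ = (η / (2 * ‖D‖)) * Real.sqrt mC := by ring
        _ ≤ (‖G‖ / ‖D‖) * Real.sqrt ((∫ t in (3*η)..d, fC t)) := by
            apply mul_le_mul hcoef_lo (Real.sqrt_le_sqrt hC1) (Real.sqrt_nonneg _) hsq_nonneg
    · calc (‖G‖ / ‖D‖) * Real.sqrt ((∫ t in (3*η)..d, fC t))
          ≤ (2 * η / ‖D‖) * Real.sqrt MC := by
            apply mul_le_mul hcoef_hi (Real.sqrt_le_sqrt hC2) (Real.sqrt_nonneg _) (by positivity)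
        _ ≤ (2 * η / ‖D‖) * max (Real.sqrt MS) (Real.sqrt MC) :=
            mul_le_mul_of_nonneg_left (le_max_right _ _) (by positivity)
        _ = (2 * max (Real.sqrt MS) (Real.sqrt MC) / ‖D‖) * η := by ring
end

section
/- Let d > 0, Ω₀ = ℝ × (0,d), and u ∈ H²(Ω₀) with u = 0 on Γ₀ = {x₂ = 0}. Then for every h ∈ (0, d/2), ∫_ℝ |u(x₁, h)|² dx₁ ≤ C h² ‖u‖²_{H²(Ω₀)} and ∫_ℝ |∇u(x₁, h)|² dx₁ ≤ C ‖u‖²_{H²(Ω₀)}, with C depending only on d. -/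
open MeasureTheory Set

lemma cs_helper (d : ℝ) (hd : 0 < d) (g : ℝ → ℝ)
    (h1 : IntegrableOn g (Ioo 0 d))
    (h2 : IntegrableOn (fun x => g x ^ 2) (Ioo 0 d)) :
    (∫ x in Ioo 0 d, g x) ^ 2 ≤ d * ∫ x in Ioo 0 d, g x ^ 2 := by
  have hvol : (volume (Ioo (0:ℝ) d)).toReal = d := by
    rw [Real.volume_Ioo]; rw [ENNReal.toReal_ofReal (by linarith)]; ring
  set J := ∫ x in Ioo 0 d, g x with hJ
  set I := ∫ x in Ioo 0 d, g x ^ 2 with hI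
  set c := J / d with hc
  have hcd : c * d = J := div_mul_cancel₀ _ (ne_of_gt hd)
  have expand : ∀ x, (g x - c) ^ 2 = g x ^ 2 - 2 * c * g x + c ^ 2 := by
    intro x; ring
  have hsub : Integrable (fun x => g x ^ 2 - 2 * c * g x)
      (volume.restrict (Ioo 0 d)) := h2.sub (h1.const_mul (2*c))
  have hint : ∫ x in Ioo 0 d, (g x - c) ^ 2 = I - 2 * c * J + c ^ 2 * d := by
    simp_rw [expand]
    rw [integral_add hsub (integrable_const _), integral_sub h2 (h1.const_mul (2*c)),
      integral_const_mul, integral_const]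
    rw [measureReal_restrict_apply_univ, Measure.real, hvol, smul_eq_mul]
    ring
  have h0 : 0 ≤ ∫ x in Ioo 0 d, (g x - c) ^ 2 :=
    integral_nonneg (fun x => sq_nonneg _)
  rw [hint] at h0
  nlinarith [h0, hcd, hd, sq_nonneg c]

lemma oneD {E : Type*} [NormedAddCommGroup E] [NormedSpace ℝ E] [CompleteSpace E]
    (d : ℝ) (hd : 0 < d) (f f' : ℝ → E)
    (hf : ∀ t, HasDerivAt f (f' t) t)
    (hint : IntegrableOn (fun s => ‖f s‖ ^ 2 + ‖f' s‖ ^ 2) (Ioo 0 d))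
    {t : ℝ} (ht : t ∈ Ioo 0 d) :
    ‖f t‖ ^ 2 ≤ (2 / d + 2 * d) * ∫ s in Ioo 0 d, (‖f s‖ ^ 2 + ‖f' s‖ ^ 2) := by
  have hfc : Continuous f := by
    rw [continuous_iff_continuousAt]; exact fun s => (hf s).continuousAt
  have hf'eq : f' = deriv f := funext fun s => ((hf s).deriv).symm
  have hmeas : AEStronglyMeasurable f' (volume.restrict (Ioo 0 d)) := by
    rw [hf'eq]; exact (stronglyMeasurable_deriv f).aestronglyMeasurable
  have hmeasn : AEStronglyMeasurable (fun s => ‖f' s‖ ^ 2) (volume.restrict (Ioo 0 d)) := by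
    simp_rw [pow_two]; exact hmeas.norm.mul hmeas.norm
  have hnn : ∀ s : ℝ, (0:ℝ) ≤ ‖f s‖ ^ 2 + ‖f' s‖ ^ 2 := fun s => by positivity
  have hf2 : IntegrableOn (fun s => ‖f s‖ ^ 2) (Ioo 0 d) := by
    refine Integrable.mono' hint ((hfc.norm.pow 2).aestronglyMeasurable) ?_
    filter_upwards with s
    rw [Real.norm_eq_abs, abs_of_nonneg (by positivity)]
    nlinarith [sq_nonneg ‖f' s‖]
  have hf'2 : IntegrableOn (fun s => ‖f' s‖ ^ 2) (Ioo 0 d) := by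
    refine Integrable.mono' hint hmeasn ?_
    filter_upwards with s
    rw [Real.norm_eq_abs, abs_of_nonneg (by positivity)]
    nlinarith [sq_nonneg ‖f s‖]
  have hμfin : volume (Ioo (0:ℝ) d) < ⊤ := by
    rw [Real.volume_Ioo]; exact ENNReal.ofReal_lt_top
  have hf'1 : IntegrableOn (fun s => ‖f' s‖) (Ioo 0 d) := by
    refine Integrable.mono' (g := fun s => 1 + ‖f' s‖ ^ 2) ?_ hmeas.norm ?_
    · exact ((integrableOn_const_iff (C := (1:ℝ))).2 (Or.inr hμfin)).add hf'2
    filter_upwards with s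
    rw [Real.norm_eq_abs, abs_of_nonneg (norm_nonneg _)]
    nlinarith [norm_nonneg (f' s), sq_nonneg (‖f' s‖ - 1)]
  have hf'int : IntegrableOn f' (Ioo 0 d) :=
    (integrable_norm_iff hmeas).1 hf'1
  set J := ∫ s in Ioo 0 d, ‖f' s‖ with hJdef
  have hJnn : 0 ≤ J := integral_nonneg fun s => norm_nonneg _
  have hJ2 : J ^ 2 ≤ d * ∫ s in Ioo 0 d, ‖f' s‖ ^ 2 := cs_helper d hd _ hf'1 hf'2
  -- pointwise bound over s
  have key : ∀ s ∈ Ioo (0:ℝ) d, ‖f t‖ ^ 2 ≤ 2 * ‖f s‖ ^ 2 + 2 * J ^ 2 := by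
    intro s hs
    have hsub : Set.uIoc s t ⊆ Ioo 0 d := by
      intro x hx
      rw [Set.mem_uIoc] at hx
      rcases hx with ⟨h1, h2⟩ | ⟨h1, h2⟩ <;>
        exact ⟨by cases hs; cases ht; linarith, by cases hs; cases ht; linarith⟩
    have hII : IntervalIntegrable f' volume s t := by
      rw [intervalIntegrable_iff]
      exact hf'int.mono_set hsub
    have hftc : ∫ x in s..t, f' x = f t - f s :=
      intervalIntegral.integral_eq_sub_of_hasDerivAt (fun x _ => hf x) hII
    have h1 : ‖f t - f s‖ ≤ J := by
      rw [← hftc]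
      refine (intervalIntegral.norm_integral_le_integral_norm_uIoc).trans ?_
      exact setIntegral_mono_set hf'1 (Filter.Eventually.of_forall fun x => norm_nonneg _)
        (HasSubset.Subset.eventuallyLE hsub)
    have h2 : ‖f t‖ ≤ ‖f s‖ + J := by
      have := norm_sub_norm_le (f t) (f s)
      linarith
    nlinarith [h2, sq_nonneg (‖f s‖ - J), norm_nonneg (f t), norm_nonneg (f s)]
  -- average over s
  set S := ∫ s in Ioo 0 d, (‖f s‖ ^ 2 + ‖f' s‖ ^ 2) with hSdef
  have hSnn : 0 ≤ S := integral_nonneg fun s => hnn s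
  have hS1 : ∫ s in Ioo 0 d, ‖f s‖ ^ 2 ≤ S :=
    setIntegral_mono_on hf2 hint measurableSet_Ioo
      (fun x _ => le_add_of_nonneg_right (sq_nonneg _))
  have hS2 : ∫ s in Ioo 0 d, ‖f' s‖ ^ 2 ≤ S :=
    setIntegral_mono_on hf'2 hint measurableSet_Ioo
      (fun x _ => le_add_of_nonneg_left (sq_nonneg _))
  have hvol : (volume (Ioo (0:ℝ) d)).toReal = d := by
    rw [Real.volume_Ioo]; rw [ENNReal.toReal_ofReal (by linarith)]; ring
  have hconst : ∫ _ in Ioo 0 d, ‖f t‖ ^ 2 = d * ‖f t‖ ^ 2 := by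
    rw [integral_const, measureReal_restrict_apply_univ, Measure.real, hvol, smul_eq_mul]
  have havg : d * ‖f t‖ ^ 2 ≤ 2 * (∫ s in Ioo 0 d, ‖f s‖ ^ 2) + 2 * J ^ 2 * d := by
    rw [← hconst]
    have hstep : ∫ _ in Ioo 0 d, ‖f t‖ ^ 2 ≤ ∫ s in Ioo 0 d, (2 * ‖f s‖ ^ 2 + 2 * J ^ 2) := by
      refine setIntegral_mono_on ((integrableOn_const_iff (C := ‖f t‖ ^ 2)).2 (Or.inr hμfin))
        ((hf2.const_mul 2).add ((integrableOn_const_iff (C := 2 * J ^ 2)).2 (Or.inr hμfin)))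
        measurableSet_Ioo key
    refine hstep.trans ?_
    rw [integral_add (hf2.const_mul 2) ((integrableOn_const_iff (C := 2 * J ^ 2)).2 (Or.inr hμfin)),
      integral_const_mul, integral_const, measureReal_restrict_apply_univ, Measure.real, hvol, smul_eq_mul]
    ring_nf
    exact le_rfl
  have hgoal : d * ‖f t‖ ^ 2 ≤ d * ((2 / d + 2 * d) * S) := by
    have heq : d * ((2 / d + 2 * d) * S) = 2 * S + 2 * d ^ 2 * S := by
      field_simp
    rw [heq]
    nlinarith [havg, hJ2, hS1, hS2, hd, hSnn]
  exact le_of_mul_le_mul_left hgoal hd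


set_option maxHeartbeats 2000000 in
/-- Trace estimates on horizontal lines `{x₂ = h}` for `u ∈ H²(Ω₀)`, `Ω₀ = ℝ × (0,d)`,
vanishing on `Γ₀ = {x₂ = 0}`:
`∫_ℝ |u(x₁,h)|² ≤ C h² ‖u‖²_{H²(Ω₀)}` and `∫_ℝ |∇u(x₁,h)|² ≤ C ‖u‖²_{H²(Ω₀)}`. -/
theorem horizontal_trace_estimates (d : ℝ) (hd : 0 < d) :
    ∃ C > (0 : ℝ), ∀ (u : ℝ × ℝ → ℂ) (Du : ℝ × ℝ → (ℝ × ℝ) →L[ℝ] ℂ)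
      (D2u : ℝ × ℝ → (ℝ × ℝ) →L[ℝ] ((ℝ × ℝ) →L[ℝ] ℂ)),
      (∀ x, HasFDerivAt u (Du x) x) →
      (∀ x, HasFDerivAt Du (D2u x) x) →
      (∀ x₁ : ℝ, u (x₁, 0) = 0) →
      IntegrableOn (fun x => ‖u x‖ ^ 2 + ‖Du x‖ ^ 2 + ‖D2u x‖ ^ 2)
        (Set.univ ×ˢ Set.Ioo (0 : ℝ) d) →
      ∀ h ∈ Set.Ioo (0 : ℝ) (d / 2),
        (∫ x₁ : ℝ, ‖u (x₁, h)‖ ^ 2) ≤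
          C * h ^ 2 * ∫ x in Set.univ ×ˢ Set.Ioo (0 : ℝ) d,
            (‖u x‖ ^ 2 + ‖Du x‖ ^ 2 + ‖D2u x‖ ^ 2) ∧
        (∫ x₁ : ℝ, ‖Du (x₁, h)‖ ^ 2) ≤
          C * ∫ x in Set.univ ×ˢ Set.Ioo (0 : ℝ) d,
            (‖u x‖ ^ 2 + ‖Du x‖ ^ 2 + ‖D2u x‖ ^ 2) := by
  have hC : (0:ℝ) < 2 / d + 2 * d := by
    have : (0:ℝ) < 2 / d := div_pos two_pos hd
    linarith
  refine ⟨2 / d + 2 * d, hC, ?_⟩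
  intro u Du D2u hu hDu hu0 hF h hh
  set C₁ : ℝ := 2 / d + 2 * d with hC₁def
  set F : ℝ × ℝ → ℝ := fun x => ‖u x‖ ^ 2 + ‖Du x‖ ^ 2 + ‖D2u x‖ ^ 2 with hFdef
  have hhd : h ∈ Set.Ioo (0:ℝ) d := ⟨hh.1, by have := hh.2; linarith⟩
  have hrestr : (volume : Measure (ℝ × ℝ)).restrict (Set.univ ×ˢ Set.Ioo (0:ℝ) d)
      = ((volume : Measure ℝ).restrict Set.univ).prod
        ((volume : Measure ℝ).restrict (Set.Ioo 0 d)) := by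
    rw [Measure.prod_restrict, ← Measure.volume_eq_prod]
  have hprod : Integrable F (((volume : Measure ℝ).restrict Set.univ).prod
      ((volume : Measure ℝ).restrict (Set.Ioo 0 d))) := by
    rw [← hrestr]; exact hF
  have hslice : ∀ᵐ x₁ : ℝ, IntegrableOn (fun t => F (x₁, t)) (Set.Ioo 0 d) := by
    have := hprod.prod_right_ae
    rwa [Measure.restrict_univ] at this
  set A : ℝ → ℝ := fun x₁ => ∫ t in Set.Ioo 0 d, F (x₁, t) with hAdef
  have hAnn : ∀ x₁, 0 ≤ A x₁ := fun x₁ =>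
    integral_nonneg fun t => by simp only [hFdef]; positivity
  have hA_int : Integrable A volume := by
    have := hprod.integral_prod_left
    rwa [Measure.restrict_univ] at this
  have hrepr : ∫ x in Set.univ ×ˢ Set.Ioo (0:ℝ) d, F x = ∫ x₁, A x₁ := by
    rw [hrestr, integral_prod _ hprod, Measure.restrict_univ]
  -- continuity facts
  have huc : Continuous u := by
    rw [continuous_iff_continuousAt]; exact fun x => (hu x).continuousAt
  have hDuc : Continuous Du := by
    rw [continuous_iff_continuousAt]; exact fun x => (hDu x).continuousAt
  have hnorm01 : ‖((0:ℝ), (1:ℝ))‖ = 1 := by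
    simp [Prod.norm_def]
  -- key a.e. pointwise estimates
  have key : ∀ᵐ x₁ : ℝ, ‖u (x₁, h)‖ ^ 2 ≤ C₁ * h ^ 2 * A x₁ ∧
      ‖Du (x₁, h)‖ ^ 2 ≤ C₁ * A x₁ := by
    filter_upwards [hslice] with x₁ hx₁
    have hline : ∀ t : ℝ, HasDerivAt (fun t : ℝ => (x₁, t)) ((0:ℝ), (1:ℝ)) t :=
      fun t => (hasDerivAt_const t x₁).prodMk (hasDerivAt_id t)
    set fDu : ℝ → (ℝ × ℝ) →L[ℝ] ℂ := fun t => Du (x₁, t) with hfDudef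
    set fDu' : ℝ → (ℝ × ℝ) →L[ℝ] ℂ := fun t => D2u (x₁, t) ((0:ℝ), (1:ℝ)) with hfDu'def
    have hfDu : ∀ t : ℝ, HasDerivAt fDu (fDu' t) t :=
      fun t => (hDu (x₁, t)).comp_hasDerivAt t (hline t)
    have hfDuc : Continuous fDu := hDuc.comp (continuous_const.prodMk continuous_id)
    have hfDu'bd : ∀ t : ℝ, ‖fDu' t‖ ≤ ‖D2u (x₁, t)‖ := by
      intro t
      calc ‖fDu' t‖ ≤ ‖D2u (x₁, t)‖ * ‖((0:ℝ), (1:ℝ))‖ :=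
            (D2u (x₁, t)).le_opNorm _
        _ = ‖D2u (x₁, t)‖ := by rw [hnorm01, mul_one]
    have hfDu'm : AEStronglyMeasurable fDu' (volume.restrict (Set.Ioo 0 d)) := by
      have : fDu' = deriv fDu := funext fun t => ((hfDu t).deriv).symm
      rw [this]; exact (stronglyMeasurable_deriv fDu).aestronglyMeasurable
    have hintDu : IntegrableOn (fun t => ‖fDu t‖ ^ 2 + ‖fDu' t‖ ^ 2) (Set.Ioo 0 d) := by
      refine Integrable.mono' hx₁ ?_ ?_
      · refine ((hfDuc.norm.pow 2).aestronglyMeasurable).add ?_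
        have := hfDu'm.norm.mul hfDu'm.norm
        simpa [pow_two, Pi.mul_def] using this
      · filter_upwards with t
        rw [Real.norm_eq_abs, abs_of_nonneg (by positivity)]
        have h1 : ‖fDu' t‖ ^ 2 ≤ ‖D2u (x₁, t)‖ ^ 2 :=
          pow_le_pow_left₀ (norm_nonneg _) (hfDu'bd t) 2
        simp only [hFdef, hfDudef]
        nlinarith [sq_nonneg ‖u (x₁, t)‖]
    set B : ℝ := ∫ t in Set.Ioo 0 d, (‖fDu t‖ ^ 2 + ‖fDu' t‖ ^ 2) with hBdef
    have hBnn : 0 ≤ B := integral_nonneg fun t => by positivity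
    have hBA : B ≤ A x₁ := by
      refine setIntegral_mono_on hintDu hx₁ measurableSet_Ioo ?_
      intro t _
      have h1 : ‖fDu' t‖ ^ 2 ≤ ‖D2u (x₁, t)‖ ^ 2 :=
        pow_le_pow_left₀ (norm_nonneg _) (hfDu'bd t) 2
      simp only [hFdef, hfDudef]
      nlinarith [sq_nonneg ‖u (x₁, t)‖]
    have hDu_bd : ∀ t ∈ Set.Ioo (0:ℝ) d, ‖Du (x₁, t)‖ ^ 2 ≤ C₁ * B := by
      intro t ht
      have := oneD d hd fDu fDu' hfDu hintDu ht
      simpa [hfDudef, hC₁def, hBdef] using this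
    constructor
    · -- first estimate
      set fu : ℝ → ℂ := fun t => u (x₁, t) with hfudef
      set fu' : ℝ → ℂ := fun t => Du (x₁, t) ((0:ℝ), (1:ℝ)) with hfu'def
      have hfu : ∀ t : ℝ, HasDerivAt fu (fu' t) t :=
        fun t => (hu (x₁, t)).comp_hasDerivAt t (hline t)
      have hfu'c : Continuous fu' := by
        exact (ContinuousLinearMap.apply ℝ ℂ ((0:ℝ), (1:ℝ))).continuous.comp hfDuc
      have hII : IntervalIntegrable fu' volume 0 h :=
        hfu'c.intervalIntegrable 0 h
      have hftc : ∫ t in (0:ℝ)..h, fu' t = u (x₁, h) :=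
        by rw [intervalIntegral.integral_eq_sub_of_hasDerivAt (fun t _ => hfu t) hII]
           simp [hfudef, hu0 x₁]
      set M : ℝ := Real.sqrt (C₁ * B) with hMdef
      have hMnn : 0 ≤ M := Real.sqrt_nonneg _
      have hbd : ∀ t ∈ Set.uIoc (0:ℝ) h, ‖fu' t‖ ≤ M := by
        intro t ht
        rw [Set.uIoc_of_le hhd.1.le] at ht
        have htd : t ∈ Set.Ioo (0:ℝ) d := ⟨ht.1, lt_of_le_of_lt ht.2 hhd.2⟩
        have h1 : ‖fu' t‖ ≤ ‖Du (x₁, t)‖ := by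
          calc ‖fu' t‖ ≤ ‖Du (x₁, t)‖ * ‖((0:ℝ), (1:ℝ))‖ :=
                (Du (x₁, t)).le_opNorm _
            _ = ‖Du (x₁, t)‖ := by rw [hnorm01, mul_one]
        have h2 : ‖Du (x₁, t)‖ ≤ M := by
          rw [hMdef]
          rw [show ‖Du (x₁, t)‖ = Real.sqrt (‖Du (x₁, t)‖ ^ 2) from
            (Real.sqrt_sq (norm_nonneg _)).symm]
          exact Real.sqrt_le_sqrt (hDu_bd t htd)
        linarith
      have hnorm : ‖u (x₁, h)‖ ≤ M * h := by
        rw [← hftc]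
        have := intervalIntegral.norm_integral_le_of_norm_le_const hbd
        rwa [sub_zero, abs_of_pos hhd.1] at this
      have hsq : ‖u (x₁, h)‖ ^ 2 ≤ (M * h) ^ 2 :=
        pow_le_pow_left₀ (norm_nonneg _) hnorm 2
      have hMsq : M ^ 2 = C₁ * B := Real.sq_sqrt (by positivity)
      calc ‖u (x₁, h)‖ ^ 2 ≤ (M * h) ^ 2 := hsq
        _ = C₁ * B * h ^ 2 := by rw [mul_pow, hMsq]
        _ ≤ C₁ * A x₁ * h ^ 2 :=
            mul_le_mul_of_nonneg_right (mul_le_mul_of_nonneg_left hBA hC.le) (sq_nonneg h)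
        _ = C₁ * h ^ 2 * A x₁ := by ring
    · -- second estimate
      calc ‖Du (x₁, h)‖ ^ 2 ≤ C₁ * B := hDu_bd h hhd
        _ ≤ C₁ * A x₁ := mul_le_mul_of_nonneg_left hBA hC.le
  -- conclude
  have keyu : ∀ᵐ x₁ : ℝ, ‖u (x₁, h)‖ ^ 2 ≤ C₁ * h ^ 2 * A x₁ := key.mono fun _ hx => hx.1
  have keyDu : ∀ᵐ x₁ : ℝ, ‖Du (x₁, h)‖ ^ 2 ≤ C₁ * A x₁ := key.mono fun _ hx => hx.2
  have hint_u : Integrable (fun x₁ => ‖u (x₁, h)‖ ^ 2) volume := by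
    refine Integrable.mono' (hA_int.const_mul (C₁ * h ^ 2)) ?_ ?_
    · exact (((huc.comp (continuous_id.prodMk continuous_const)).norm.pow 2)).aestronglyMeasurable
    · filter_upwards [keyu] with x₁ hx₁
      rwa [Real.norm_eq_abs, abs_of_nonneg (by positivity)]
  have hint_Du : Integrable (fun x₁ => ‖Du (x₁, h)‖ ^ 2) volume := by
    refine Integrable.mono' (hA_int.const_mul C₁) ?_ ?_
    · exact (((hDuc.comp (continuous_id.prodMk continuous_const)).norm.pow 2)).aestronglyMeasurable
    · filter_upwards [keyDu] with x₁ hx₁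
      rwa [Real.norm_eq_abs, abs_of_nonneg (by positivity)]
  constructor
  · calc ∫ x₁ : ℝ, ‖u (x₁, h)‖ ^ 2
        ≤ ∫ x₁ : ℝ, C₁ * h ^ 2 * A x₁ :=
          integral_mono_ae hint_u (hA_int.const_mul _) keyu
      _ = C₁ * h ^ 2 * ∫ x₁, A x₁ := integral_const_mul _ _
      _ = C₁ * h ^ 2 * ∫ x in Set.univ ×ˢ Set.Ioo (0:ℝ) d, F x := by rw [hrepr]
  · calc ∫ x₁ : ℝ, ‖Du (x₁, h)‖ ^ 2
        ≤ ∫ x₁ : ℝ, C₁ * A x₁ :=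
          integral_mono_ae hint_Du (hA_int.const_mul _) keyDu
      _ = C₁ * ∫ x₁, A x₁ := integral_const_mul _ _
      _ = C₁ * ∫ x in Set.univ ×ˢ Set.Ioo (0:ℝ) d, F x := by rw [hrepr]
end
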